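/- arXiv:2105.04063 — 5 statements merged into one kernel-verified Lean document; each statement's English description precedes it below -/
import Mathlib

section
/- Let Γ be a countable discrete group, let a be a Borel action of Γ on a standard Borel space X, let G be a Borel graph on X, and fix a generic sequence ⟨(γ_n, s_n) : n ∈ ℕ⟩. Then either (G, a) admits a Borel a-coloring, or there is a Borel equivariant homomorphism f : Γ × 2^ω → X from (G_Γ, a_Γ) to (G, a), i.e. f(h ·_{a_Γ} x) = h ·_a f(x) for all h ∈ Γ and all x ∈ Γ × 2^ω, and (f(x), f(y)) ∈ G whenever x and y are G_Γ-adjacent. -/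
namespace Paper

variable {X Y : Type*}

/-- A (simple, undirected) graph on `X`: a symmetric irreflexive set of ordered pairs. -/
def IsGraph (G : Set (X × X)) : Prop :=
  (∀ x y, (x, y) ∈ G → (y, x) ∈ G) ∧ ∀ x, (x, x) ∉ G

/-- Connectedness (same component) relation of a graph. -/
def Conn (G : Set (X × X)) : X → X → Prop :=
  Relation.ReflTransGen fun x y => (x, y) ∈ G

/-- The reversal of a directed edge. -/
def neg (e : X × X) : X × X := (e.2, e.1)

end Paper
namespace Paper

/-- Concatenation of a finite binary string with an element of `2^ω`. -/
def cat (s : List Bool) (z : ℕ → Bool) : ℕ → Bool := fun n =>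
  if h : n < s.length then s.get ⟨n, h⟩ else z (n - s.length)

/-- A generic sequence `⟨(γ_n, s_n) : n ∈ ℕ⟩`: `s_n ∈ 2^n`, every group element
appears as `γ_n` for infinitely many `n`, and every finite binary string is
extended by some `s_n`. -/
def GenericSeq {Γ : Type*} (γseq : ℕ → Γ) (sseq : ℕ → List Bool) : Prop :=
  (∀ n, (sseq n).length = n) ∧
  (∀ γ : Γ, ∀ m : ℕ, ∃ n, m ≤ n ∧ γseq n = γ) ∧
  ∀ t : List Bool, ∃ n, t <+: sseq n

/-- The graph `G_Γ` on `Γ × 2^ω` determined by a generic sequence: it joins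
`(γ, s_n⌢0⌢z)` and `(γ, s_n⌢1⌢z)` whenever `γ_n = γ`. -/
def GGamma {Γ : Type*} (γseq : ℕ → Γ) (sseq : ℕ → List Bool) :
    Set ((Γ × (ℕ → Bool)) × (Γ × (ℕ → Bool))) :=
  {p | p.1.1 = p.2.1 ∧ ∃ n z, γseq n = p.1.1 ∧
    ((p.1.2 = cat (sseq n ++ [false]) z ∧ p.2.2 = cat (sseq n ++ [true]) z) ∨
     (p.1.2 = cat (sseq n ++ [true]) z ∧ p.2.2 = cat (sseq n ++ [false]) z))}

/-- The action `a_Γ` of `Γ` on `Γ × 2^ω`: `γ · (γ', z) = (γγ', z)`. -/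
def aGamma {Γ : Type*} [Group Γ] (h : Γ) (p : Γ × (ℕ → Bool)) : Γ × (ℕ → Bool) :=
  (h * p.1, p.2)

/-- `f` is a Borel a-coloring of `(G, a)`: a Borel map `f : Y → ℕ × Γ` so that for
every `n` the set `{h ·_a y : f y = (n, h)}` is `G`-independent. -/
def IsBorelAColoring {Γ Y : Type*} [MeasurableSpace Γ] [MeasurableSpace Y]
    (G : Set (Y × Y)) (a : Γ → Y → Y) (f : Y → ℕ × Γ) : Prop :=
  Measurable f ∧ ∀ (n : ℕ) (y y' : Y) (h h' : Γ),
    f y = (n, h) → f y' = (n, h') → (a h y, a h' y') ∉ G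

end Paper


set_option linter.unusedSectionVars false
set_option maxHeartbeats 1000000
open Set Function MeasureTheory Cardinal

namespace G0D


abbrev Idx : Type := List Bool ⊕ (ℕ × List Bool)
abbrev Bs : Type := ℕ → ℕ
abbrev Cfg : Type := Idx → Bs

def Rel (n : ℕ) : Idx → Prop
  | Sum.inl u => u.length = n
  | Sum.inr (k, v) => k < n ∧ k + 1 + v.length = n

def Agr (n : ℕ) (c₀ c : Cfg) : Prop :=
  ∀ i, Rel n i → ∀ j, j < n → c i j = c₀ i j

open Classical in
noncomputable def canon (n : ℕ) (c : Cfg) : Cfg := fun i =>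
  if Rel n i then (fun j => if j < n then c i j else 0) else fun _ => 0

lemma canon_eq {n : ℕ} {c : Cfg} {i : Idx} (hi : Rel n i) {j : ℕ} (hj : j < n) :
    canon n c i j = c i j := by simp [canon, hi, hj]

lemma agr_canon (n : ℕ) (c₀ c : Cfg) : Agr n (canon n c₀) c ↔ Agr n c₀ c := by
  constructor
  · intro h i hi j hj
    rw [h i hi j hj, canon_eq hi hj]
  · intro h i hi j hj
    rw [h i hi j hj, canon_eq hi hj]

lemma agr_refl (n : ℕ) (c : Cfg) : Agr n c c := fun _ _ _ _ => rfl

private def relEmb (n : ℕ) : {i : Idx // Rel n i} → (Fin n → Bool) × (Fin (n+1)) :=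
  fun x =>
    match x with
    | ⟨Sum.inl u, _⟩ => ⟨fun j => u.getD j false, Fin.last n⟩
    | ⟨Sum.inr (k, v), h⟩ => ⟨fun j => v.getD j false, ⟨k, by
        rcases h with ⟨h1, _⟩; omega⟩⟩

lemma finite_rel (n : ℕ) : Finite {i : Idx // Rel n i} := by
  classical
  have hinj : Function.Injective (relEmb n) := by
    rintro ⟨i, hi⟩ ⟨i', hi'⟩ h
    rcases i with u | ⟨k, v⟩ <;> rcases i' with u' | ⟨k', v'⟩
    · simp only [relEmb, Prod.mk.injEq] at h
      have hlen : u.length = u'.length := by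
        simp only [Rel] at hi hi'; omega
      have heq : u = u' := by
        apply List.ext_getElem hlen
        intro j hj hj'
        have hju : j < n := by simp only [Rel] at hi; omega
        have := congrFun h.1 ⟨j, hju⟩
        simpa [List.getD_eq_getElem?_getD, List.getElem?_eq_getElem, hj, hj'] using this
      simp [heq]
    · exfalso
      simp only [relEmb, Prod.mk.injEq] at h
      rcases hi' with ⟨h1, _⟩
      have h2 : (Fin.last n : Fin (n+1)).val = k' := congrArg Fin.val h.2
      simp only [Fin.val_last] at h2; omega
    · exfalso
      simp only [relEmb, Prod.mk.injEq] at h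
      rcases hi with ⟨h1, _⟩
      have h2 : k = (Fin.last n : Fin (n+1)).val := congrArg Fin.val h.2
      simp only [Fin.val_last] at h2; omega
    · simp only [relEmb, Prod.mk.injEq] at h
      rcases hi with ⟨h1, h2⟩
      rcases hi' with ⟨h1', h2'⟩
      have hk : k = k' := by have := congrArg Fin.val h.2; simpa using this
      subst hk
      have hlen : v.length = v'.length := by omega
      have heq : v = v' := by
        apply List.ext_getElem hlen
        intro j hj hj'
        have hju : j < n := by omega
        have := congrFun h.1 ⟨j, hju⟩
        simpa [List.getD_eq_getElem?_getD, List.getElem?_eq_getElem, hj, hj'] using this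
      simp [heq]
  exact Finite.of_injective (relEmb n) hinj

private noncomputable def canonEmb (n : ℕ) :
    Set.range (canon n) → ({i : Idx // Rel n i} → (Fin n → ℕ)) :=
  fun c i j => (c : Cfg) i.val j.val

lemma countable_range_canon (n : ℕ) : (Set.range (canon n)).Countable := by
  classical
  haveI := finite_rel n
  rw [← Set.countable_coe_iff]
  have hinj : Function.Injective (canonEmb n) := by
    rintro ⟨c, c₀, rfl⟩ ⟨c', c₀', rfl⟩ h
    apply Subtype.ext
    funext i j
    by_cases hi : Rel n i
    · by_cases hj : j < n
      · have := congrFun (congrFun h ⟨i, hi⟩) ⟨j, hj⟩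
        simpa [canonEmb] using this
      · simp [canon, hi, hj]
    · simp [canon, hi]
  exact hinj.countable

section Anal

variable {α : Type*} [TopologicalSpace α] [PolishSpace α] [MeasurableSpace α] [BorelSpace α]

lemma anal_inter {s t : Set α} (hs : AnalyticSet s) (ht : AnalyticSet t) :
    AnalyticSet (s ∩ t) := by
  have : s ∩ t = ⋂ b : Bool, (if b then s else t) := by
    ext x; simp [Set.mem_iInter, Bool.forall_bool]; tauto
  rw [this]
  exact AnalyticSet.iInter (fun b => by cases b <;> simpa)

/-- the `H`-neighborhood of an analytic set is analytic -/
lemma anal_nbhd {H : Set (α × α)} (hH : MeasurableSet H) {S : Set α} (hS : AnalyticSet S) :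
    AnalyticSet {x : α | ∃ y ∈ S, (x, y) ∈ H} := by
  have h1 : AnalyticSet (H ∩ (Set.univ ×ˢ S)) := by
    apply anal_inter hH.analyticSet
    rcases analyticSet_iff_exists_polishSpace_range.1 hS with ⟨β, hβt, hβp, f, hf, hrange⟩
    have : (Set.univ ×ˢ S : Set (α × α)) = range (fun p : α × β => (p.1, f p.2)) := by
      ext ⟨x, y⟩
      simp only [Set.mem_prod, Set.mem_univ, true_and, Set.mem_range, Prod.mk.injEq]
      constructor
      · intro hy
        rw [← hrange] at hy
        rcases hy with ⟨b, rfl⟩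
        exact ⟨⟨x, b⟩, rfl, rfl⟩
      · rintro ⟨⟨x', b⟩, rfl, rfl⟩
        rw [← hrange]; exact ⟨b, rfl⟩
    rw [this]
    exact analyticSet_range_of_polishSpace (continuous_fst.prodMk (hf.comp continuous_snd))
  have h2 : {x : α | ∃ y ∈ S, (x, y) ∈ H} = Prod.fst '' (H ∩ (Set.univ ×ˢ S)) := by
    ext x
    simp only [mem_setOf_eq, Set.mem_image, Set.mem_inter_iff, Set.mem_prod, Set.mem_univ, true_and,
      Prod.exists]
    constructor
    · rintro ⟨y, hy, hxy⟩; exact ⟨x, y, ⟨hxy, hy⟩, rfl⟩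
    · rintro ⟨x', y, ⟨hxy, hy⟩, rfl⟩; exact ⟨y, hy, hxy⟩
  rw [h2]
  exact h1.image_of_continuous continuous_fst

/-- every analytic independent set is contained in a Borel independent set -/
lemma borelize_indep {H : Set (α × α)} (hH : MeasurableSet H)
    (hsym : ∀ x y, (x, y) ∈ H → (y, x) ∈ H)
    {A : Set α} (hA : AnalyticSet A)
    (hind : ∀ x ∈ A, ∀ y ∈ A, (x, y) ∉ H) :
    ∃ D : Set α, MeasurableSet D ∧ A ⊆ D ∧ ∀ x ∈ D, ∀ y ∈ D, (x, y) ∉ H := by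
  set N : Set α → Set α := fun S => {x : α | ∃ y ∈ S, (x, y) ∈ H} with hN
  have hdisj0 : Disjoint A (N A) := by
    rw [Set.disjoint_left]
    rintro x hxA ⟨y, hyA, hxy⟩
    exact hind x hxA y hyA hxy
  obtain ⟨u, hAu, hdistu, humeas⟩ := hA.measurablySeparable (anal_nbhd hH hA) hdisj0
  have hdisj1 : Disjoint A (N u) := by
    rw [Set.disjoint_left]
    rintro x hxA ⟨y, hyu, hxy⟩
    have hyNA : y ∈ N A := ⟨x, hxA, hsym _ _ hxy⟩
    exact (Set.disjoint_left.1 hdistu) hyNA hyu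
  obtain ⟨u', hAu', hdistu', humeas'⟩ :=
    hA.measurablySeparable (anal_nbhd hH humeas.analyticSet) hdisj1
  refine ⟨u ∩ u', humeas.inter humeas', subset_inter hAu hAu', ?_⟩
  rintro x ⟨hxu, hxu'⟩ y ⟨hyu, hyu'⟩ hxy
  have : x ∈ N u := ⟨y, hyu, hxy⟩
  exact (Set.disjoint_left.1 hdistu') this hxu'

end Anal


def Ext (n : ℕ) (c c' : Cfg) : Prop :=
  (∀ u : List Bool, u.length = n → ∀ i : Bool, ∀ j, j < n →
    c' (Sum.inl (u ++ [i])) j = c (Sum.inl u) j) ∧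
  (∀ k v, k < n → k + 1 + v.length = n → ∀ i : Bool, ∀ j, j < n →
    c' (Sum.inr (k, v ++ [i])) j = c (Sum.inr (k, v)) j)

/-- The bundled context for the dichotomy argument. -/
structure Ctx (Γ X : Type*) [MeasurableSpace X] [TopologicalSpace X] where
  G : Set (X × X)
  a : Γ → X → X
  γseq : ℕ → Γ
  sseq : ℕ → List Bool
  π : Bs → X
  R : Γ → Set (Bs × Bs × Bs)
  hGmeas : MeasurableSet G
  hGsym : ∀ x y, (x, y) ∈ G → (y, x) ∈ G
  haMeas : ∀ γ, Measurable (a γ)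
  hslen : ∀ n, (sseq n).length = n
  hπc : Continuous π
  hπs : Function.Surjective π
  hRc : ∀ γ, IsClosed (R γ)
  hRsound : ∀ γ w b₀ b₁, (w, b₀, b₁) ∈ R γ → (a γ (π b₀), a γ (π b₁)) ∈ G
  hRcomp : ∀ γ b₀ b₁, (a γ (π b₀), a γ (π b₁)) ∈ G → ∃ w, (w, b₀, b₁) ∈ R γ

namespace Ctx

variable {Γ X : Type*} [MeasurableSpace X] [TopologicalSpace X]
variable [PolishSpace X] [BorelSpace X]

variable (C : Ctx Γ X)

/-- the translated edge relation -/
def Hrel (γ : Γ) : Set (X × X) := {p | (C.a γ p.1, C.a γ p.2) ∈ C.G}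

lemma Hrel_meas (γ : Γ) : MeasurableSet (C.Hrel γ) :=
  ((C.haMeas γ).prodMap (C.haMeas γ)) C.hGmeas

lemma Hrel_sym (γ : Γ) : ∀ x y, (x, y) ∈ C.Hrel γ → (y, x) ∈ C.Hrel γ :=
  fun _ _ h => C.hGsym _ _ h

/-- the string of the `(k,i,v)` edge endpoint -/
def estr (k : ℕ) (i : Bool) (v : List Bool) : List Bool := C.sseq k ++ i :: v

lemma estr_length (k : ℕ) (i : Bool) (v : List Bool) :
    (C.estr k i v).length = k + 1 + v.length := by
  simp [estr, C.hslen k]; omega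

/-- configurations of height `n` inside `Y` -/
def Conf (n : ℕ) (Y : Set X) (c : Cfg) : Prop :=
  (∀ u : List Bool, u.length = n → C.π (c (Sum.inl u)) ∈ Y) ∧
  (∀ k v, k < n → k + 1 + v.length = n →
    (c (Sum.inr (k, v)), c (Sum.inl (C.estr k false v)), c (Sum.inl (C.estr k true v)))
      ∈ C.R (C.γseq k))

lemma Conf_mono {n : ℕ} {Y Y' : Set X} (h : Y ⊆ Y') {c : Cfg} (hc : C.Conf n Y c) :
    C.Conf n Y' c :=
  ⟨fun u hu => h (hc.1 u hu), hc.2⟩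

/-- the realization set of an approximation -/
def ZSet (n : ℕ) (c₀ : Cfg) (Y : Set X) : Set X :=
  {x | ∃ c, C.Conf n Y c ∧ Agr n c₀ c ∧ x = C.π (c (Sum.inl (C.sseq n)))}

lemma ZSet_mono {n : ℕ} {c₀ : Cfg} {Y Y' : Set X} (h : Y ⊆ Y') :
    C.ZSet n c₀ Y ⊆ C.ZSet n c₀ Y' := by
  rintro x ⟨c, hc, ha, rfl⟩
  exact ⟨c, C.Conf_mono h hc, ha, rfl⟩

lemma ZSet_sub {n : ℕ} {c₀ : Cfg} {Y : Set X} : C.ZSet n c₀ Y ⊆ Y := by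
  rintro x ⟨c, hc, _, rfl⟩
  exact hc.1 _ (C.hslen n)

/-- terminal approximations -/
def terminal (n : ℕ) (c₀ : Cfg) (Y : Set X) : Prop :=
  ∀ x ∈ C.ZSet n c₀ Y, ∀ y ∈ C.ZSet n c₀ Y, (x, y) ∉ C.Hrel (C.γseq n)

lemma terminal_anti {n : ℕ} {c₀ : Cfg} {Y Y' : Set X} (h : Y ⊆ Y')
    (ht : C.terminal n c₀ Y') : C.terminal n c₀ Y :=
  fun x hx y hy => ht x (C.ZSet_mono h hx) y (C.ZSet_mono h hy)

/-- the set of configurations compatible with an approximation is Borel -/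
lemma conf_set_meas (n : ℕ) (c₀ : Cfg) {Y : Set X} (hY : MeasurableSet Y) :
    MeasurableSet {c : Cfg | C.Conf n Y c ∧ Agr n c₀ c} := by
  have h1a : MeasurableSet {c : Cfg | ∀ u : List Bool, u.length = n → C.π (c (Sum.inl u)) ∈ Y} := by
    have : {c : Cfg | ∀ u : List Bool, u.length = n → C.π (c (Sum.inl u)) ∈ Y} =
        ⋂ (u : List Bool) (_ : u.length = n), {c : Cfg | C.π (c (Sum.inl u)) ∈ Y} := by
        ext c; simp
    rw [this]
    refine MeasurableSet.iInter fun u => MeasurableSet.iInter fun _ => ?_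
    exact (C.hπc.measurable.comp (measurable_pi_apply _)) hY
  have h1b : MeasurableSet {c : Cfg | ∀ k v, k < n → k + 1 + v.length = n →
      (c (Sum.inr (k, v)), c (Sum.inl (C.estr k false v)), c (Sum.inl (C.estr k true v)))
        ∈ C.R (C.γseq k)} := by
    have : {c : Cfg | ∀ k v, k < n → k + 1 + v.length = n →
          (c (Sum.inr (k, v)), c (Sum.inl (C.estr k false v)), c (Sum.inl (C.estr k true v)))
            ∈ C.R (C.γseq k)} =
        ⋂ (kv : ℕ × List Bool) (_ : kv.1 < n) (_ : kv.1 + 1 + kv.2.length = n),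
          {c : Cfg | (c (Sum.inr (kv.1, kv.2)), c (Sum.inl (C.estr kv.1 false kv.2)),
            c (Sum.inl (C.estr kv.1 true kv.2))) ∈ C.R (C.γseq kv.1)} := by
      ext c
      constructor
      · intro h
        simp only [Set.mem_iInter]
        intro kv h1 h2
        exact h kv.1 kv.2 h1 h2
      · intro h k v h1 h2
        have := Set.mem_iInter.1 h (k, v)
        simp only [Set.mem_iInter] at this
        exact this h1 h2
    rw [this]
    refine MeasurableSet.iInter fun kv => MeasurableSet.iInter fun _ =>
      MeasurableSet.iInter fun _ => ?_
    have hm : Measurable fun c : Cfg =>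
        (c (Sum.inr (kv.1, kv.2)), c (Sum.inl (C.estr kv.1 false kv.2)),
          c (Sum.inl (C.estr kv.1 true kv.2))) :=
      (measurable_pi_apply _).prodMk ((measurable_pi_apply _).prodMk (measurable_pi_apply _))
    exact hm (C.hRc (C.γseq kv.1)).measurableSet
  have h1 : MeasurableSet {c : Cfg | C.Conf n Y c} := h1a.inter h1b
  have h2 : MeasurableSet {c : Cfg | Agr n c₀ c} := by
    have : {c : Cfg | Agr n c₀ c} =
        ⋂ (i : Idx) (_ : Rel n i) (j : ℕ) (_ : j < n), {c : Cfg | c i j = c₀ i j} := by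
      ext c; simp [Agr]
    rw [this]
    refine MeasurableSet.iInter fun i => MeasurableSet.iInter fun _ =>
      MeasurableSet.iInter fun j => MeasurableSet.iInter fun _ => ?_
    have hm : Measurable fun c : Cfg => c i j :=
      (measurable_pi_apply j).comp (measurable_pi_apply i)
    exact hm (measurableSet_singleton (c₀ i j))
  exact h1.inter h2

/-- the realization set is analytic -/
lemma zset_analytic (n : ℕ) (c₀ : Cfg) {Y : Set X} (hY : MeasurableSet Y) :
    AnalyticSet (C.ZSet n c₀ Y) := by
  have : C.ZSet n c₀ Y =
      (fun c : Cfg => C.π (c (Sum.inl (C.sseq n)))) '' {c : Cfg | C.Conf n Y c ∧ Agr n c₀ c} := by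
    ext x
    constructor
    · rintro ⟨c, hc, ha, rfl⟩; exact ⟨c, ⟨hc, ha⟩, rfl⟩
    · rintro ⟨c, ⟨hc, ha⟩, rfl⟩; exact ⟨c, hc, ha, rfl⟩
  rw [this]
  exact ((C.conf_set_meas n c₀ hY).analyticSet).image_of_continuous
    (C.hπc.comp (continuous_apply _))

lemma exists_good_D (n : ℕ) (c₀ : Cfg) {Y : Set X} (hY : MeasurableSet Y)
    (hterm : C.terminal n c₀ Y) :
    ∃ D : Set X, MeasurableSet D ∧ C.ZSet n c₀ Y ⊆ D ∧
      (∀ x ∈ D, ∀ y ∈ D, (x, y) ∉ C.Hrel (C.γseq n)) ∧ (C.ZSet n c₀ Y = ∅ → D = ∅) := by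
  by_cases hz : C.ZSet n c₀ Y = ∅
  · exact ⟨∅, MeasurableSet.empty, by simp [hz], by simp, fun _ => rfl⟩
  · obtain ⟨D, h1, h2, h3⟩ := borelize_indep (C.Hrel_meas (C.γseq n)) (C.Hrel_sym (C.γseq n))
      (C.zset_analytic n c₀ hY) hterm
    exact ⟨D, h1, h2, h3, fun h => absurd h hz⟩

open Classical in
noncomputable def Dch (n : ℕ) (c₀ : Cfg) (Y : Set X) : Set X :=
  if h : MeasurableSet Y ∧ C.terminal n c₀ Y then (C.exists_good_D n c₀ h.1 h.2).choose else ∅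

lemma Dch_meas (n : ℕ) (c₀ : Cfg) (Y : Set X) : MeasurableSet (C.Dch n c₀ Y) := by
  rw [Dch]
  split
  · next h => exact (C.exists_good_D n c₀ h.1 h.2).choose_spec.1
  · exact MeasurableSet.empty

lemma Dch_indep (n : ℕ) (c₀ : Cfg) (Y : Set X) :
    ∀ x ∈ C.Dch n c₀ Y, ∀ y ∈ C.Dch n c₀ Y, (x, y) ∉ C.Hrel (C.γseq n) := by
  rw [Dch]
  split
  · next h => exact (C.exists_good_D n c₀ h.1 h.2).choose_spec.2.2.1
  · simp

lemma Dch_sub {n : ℕ} {c₀ : Cfg} {Y : Set X} (hY : MeasurableSet Y)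
    (hterm : C.terminal n c₀ Y) : C.ZSet n c₀ Y ⊆ C.Dch n c₀ Y := by
  rw [Dch, dif_pos ⟨hY, hterm⟩]
  exact (C.exists_good_D n c₀ hY hterm).choose_spec.2.1

lemma Dch_nonempty_inv {n : ℕ} {c₀ : Cfg} {Y : Set X} (h : (C.Dch n c₀ Y).Nonempty) :
    (MeasurableSet Y ∧ C.terminal n c₀ Y) ∧ (C.ZSet n c₀ Y).Nonempty := by
  by_cases hc : MeasurableSet Y ∧ C.terminal n c₀ Y
  · refine ⟨hc, ?_⟩
    rw [Set.nonempty_iff_ne_empty]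
    intro hz
    have := (C.exists_good_D n c₀ hc.1 hc.2).choose_spec.2.2.2 hz
    rw [Dch, dif_pos hc] at h
    rw [this] at h
    exact Set.not_nonempty_empty h
  · rw [Dch, dif_neg hc] at h
    exact absurd h Set.not_nonempty_empty

noncomputable def Bad (Y : Set X) : Set X :=
  ⋃ (n : ℕ) (c₀ : Set.range (canon n)), C.Dch n (c₀ : Cfg) Y

lemma Bad_meas (Y : Set X) : MeasurableSet (C.Bad Y) := by
  refine MeasurableSet.iUnion fun n => ?_
  haveI : Countable (Set.range (canon n)) := (countable_range_canon n).to_subtype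
  exact MeasurableSet.iUnion fun c₀ => C.Dch_meas n _ Y

noncomputable def Yit : Ordinal.{0} → Set X :=
  Ordinal.lt_wf.fix fun α ih => Set.univ \ ⋃ (β : {β : Ordinal // β < α}), C.Bad (ih β.1 β.2)

lemma Yit_def (α : Ordinal.{0}) :
    C.Yit α = Set.univ \ ⋃ (β : {β : Ordinal // β < α}), C.Bad (C.Yit β.1) := by
  rw [Yit, WellFounded.fix_eq]

lemma Yit_anti {α α' : Ordinal.{0}} (h : α ≤ α') : C.Yit α' ⊆ C.Yit α := by
  rw [Yit_def, Yit_def]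
  apply Set.diff_subset_diff_right
  apply Set.iUnion_subset
  rintro ⟨β, hβ⟩
  exact Set.subset_iUnion_of_subset ⟨β, lt_of_lt_of_le hβ h⟩ le_rfl

lemma Yit_not_bad {β α : Ordinal.{0}} (h : β < α) {x : X} (hx : x ∈ C.Yit α) :
    x ∉ C.Bad (C.Yit β) := by
  rw [Yit_def] at hx
  intro hmem
  exact hx.2 (Set.mem_iUnion.2 ⟨⟨β, h⟩, hmem⟩)

lemma countable_Iio_of_lt_omega1 {α : Ordinal.{0}} (h : α < (Cardinal.aleph 1).ord) :
    Countable {β : Ordinal.{0} // β < α} := by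
  have h1 : #(Set.Iio α) = Cardinal.lift.{1} α.card := Ordinal.mk_Iio_ordinal α
  have h2 : α.card < Cardinal.aleph 1 := Cardinal.lt_ord.1 h
  have h3 : α.card ≤ Cardinal.aleph0 := by
    rwa [← Cardinal.succ_aleph0, Order.lt_succ_iff] at h2
  have h4 : #(Set.Iio α) ≤ Cardinal.aleph0 := by
    rw [h1]
    exact Cardinal.lift_le_aleph0.2 h3
  exact Cardinal.mk_le_aleph0_iff.1 h4

lemma uncountable_Iio_omega1 :
    ¬ Countable {β : Ordinal.{0} // β < (Cardinal.aleph 1).ord} := by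
  intro hcnt
  have h1 : #(Set.Iio ((Cardinal.aleph 1).ord)) =
      Cardinal.lift.{1} ((Cardinal.aleph 1).ord).card := Ordinal.mk_Iio_ordinal _
  rw [Cardinal.card_ord] at h1
  have h2 : #(Set.Iio ((Cardinal.aleph 1).ord)) ≤ Cardinal.aleph0 :=
    Cardinal.mk_le_aleph0_iff.2 hcnt
  rw [h1] at h2
  exact absurd (Cardinal.lift_le_aleph0.1 h2)
    (not_le.2 Cardinal.aleph0_lt_aleph_one)

lemma Yit_meas {α : Ordinal.{0}} (h : α < (Cardinal.aleph 1).ord) :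
    MeasurableSet (C.Yit α) := by
  rw [Yit_def]
  haveI := countable_Iio_of_lt_omega1 h
  exact MeasurableSet.univ.diff (MeasurableSet.iUnion fun β => C.Bad_meas _)

lemma stable_contra (α₁ α₂ : Ordinal.{0}) (hlt : α₁ < α₂) (n : ℕ)
    (c₀ : Set.range (canon n))
    (h₁ : ((C.Dch n (c₀ : Cfg) (C.Yit α₁)) ∩ C.Yit α₁).Nonempty)
    (h₂ : ((C.Dch n (c₀ : Cfg) (C.Yit α₂)) ∩ C.Yit α₂).Nonempty) : False := by
  obtain ⟨hcond₂, hz₂⟩ := C.Dch_nonempty_inv (h₂.mono Set.inter_subset_left)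
  obtain ⟨hcond₁, _⟩ := C.Dch_nonempty_inv (h₁.mono Set.inter_subset_left)
  obtain ⟨y, hy⟩ := hz₂
  have hyY : y ∈ C.Yit α₂ := C.ZSet_sub hy
  have hy₁ : y ∈ C.ZSet n (c₀ : Cfg) (C.Yit α₁) := C.ZSet_mono (C.Yit_anti hlt.le) hy
  have hyD : y ∈ C.Dch n (c₀ : Cfg) (C.Yit α₁) := C.Dch_sub hcond₁.1 hcond₁.2 hy₁
  have hyBad : y ∈ C.Bad (C.Yit α₁) := by
    rw [Bad]
    exact Set.mem_iUnion.2 ⟨n, Set.mem_iUnion.2 ⟨c₀, hyD⟩⟩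
  exact C.Yit_not_bad hlt hyY hyBad

lemma exists_stable :
    ∃ α : Ordinal.{0}, α < (Cardinal.aleph 1).ord ∧ C.Bad (C.Yit α) ∩ C.Yit α = ∅ := by
  by_contra hcon
  push_neg at hcon
  have hne : ∀ β : {β : Ordinal.{0} // β < (Cardinal.aleph 1).ord},
      (C.Bad (C.Yit β.1) ∩ C.Yit β.1).Nonempty := by
    intro β
    exact hcon β.1 β.2
  -- pick the witnessing reason for each ordinal
  have hreason : ∀ β : {β : Ordinal.{0} // β < (Cardinal.aleph 1).ord},
      ∃ r : Σ n : ℕ, Set.range (canon n),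
        ((C.Dch r.1 (r.2 : Cfg) (C.Yit β.1)) ∩ C.Yit β.1).Nonempty := by
    intro β
    obtain ⟨x, hx1, hx2⟩ := hne β
    rw [Bad] at hx1
    rw [Set.mem_iUnion] at hx1
    obtain ⟨n, hx1⟩ := hx1
    rw [Set.mem_iUnion] at hx1
    obtain ⟨c₀, hx1⟩ := hx1
    exact ⟨⟨n, c₀⟩, ⟨x, hx1, hx2⟩⟩
  choose φ hφ using hreason
  haveI : ∀ n, Countable (Set.range (canon n)) := fun n => (countable_range_canon n).to_subtype
  have hninj : ¬ Function.Injective φ := by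
    intro hinj
    exact uncountable_Iio_omega1 hinj.countable
  rw [Function.not_injective_iff] at hninj
  obtain ⟨β₁, β₂, heq, hne12⟩ := hninj
  -- wlog β₁ < β₂
  rcases lt_or_gt_of_ne (Subtype.coe_ne_coe.2 hne12) with hlt | hlt
  case _ =>
    exact C.stable_contra β₁.1 β₂.1 hlt (φ β₁).1 (φ β₁).2 (hφ β₁)
      (by rw [heq]; exact hφ β₂)
  case _ =>
    exact C.stable_contra β₂.1 β₁.1 hlt (φ β₁).1 (φ β₁).2 (by rw [heq]; exact hφ β₂)
      (hφ β₁)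

lemma ZSet_canon (n : ℕ) (c₀ : Cfg) (Y : Set X) :
    C.ZSet n (canon n c₀) Y = C.ZSet n c₀ Y := by
  unfold ZSet
  ext x
  constructor
  · rintro ⟨c, hc, ha, rfl⟩; exact ⟨c, hc, (agr_canon n c₀ c).1 ha, rfl⟩
  · rintro ⟨c, hc, ha, rfl⟩; exact ⟨c, hc, (agr_canon n c₀ c).2 ha, rfl⟩

lemma terminal_canon (n : ℕ) (c₀ : Cfg) (Y : Set X) :
    C.terminal n (canon n c₀) Y ↔ C.terminal n c₀ Y := by
  unfold terminal
  rw [ZSet_canon]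

lemma alive_not_terminal {Y : Set X} (hmeas : MeasurableSet Y)
    (hst : C.Bad Y ∩ Y = ∅) {n : ℕ} {c₀ : Cfg}
    (halive : (C.ZSet n c₀ Y).Nonempty) : ¬ C.terminal n c₀ Y := by
  intro hterm
  obtain ⟨y, hy⟩ := halive
  have hy' : y ∈ C.ZSet n (canon n c₀) Y := by rw [ZSet_canon]; exact hy
  have hterm' : C.terminal n (canon n c₀) Y := (C.terminal_canon n c₀ Y).2 hterm
  have hyD : y ∈ C.Dch n (canon n c₀) Y := C.Dch_sub hmeas hterm' hy'
  have hyBad : y ∈ C.Bad Y := by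
    rw [Bad]
    exact Set.mem_iUnion.2 ⟨n, Set.mem_iUnion.2 ⟨⟨canon n c₀, Set.mem_range_self c₀⟩, hyD⟩⟩
  have hyY : y ∈ Y := C.ZSet_sub hy
  have : y ∈ C.Bad Y ∩ Y := ⟨hyBad, hyY⟩
  rw [hst] at this
  exact this

lemma step {Y : Set X} (hmeas : MeasurableSet Y) (hst : C.Bad Y ∩ Y = ∅)
    {n : ℕ} {c : Cfg} (hc : C.Conf n Y c) :
    ∃ c' : Cfg, C.Conf (n+1) Y c' ∧ Ext n c c' := by
  classical
  have halive : (C.ZSet n c Y).Nonempty :=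
    ⟨C.π (c (Sum.inl (C.sseq n))), c, hc, agr_refl n c, rfl⟩
  have hnt := C.alive_not_terminal hmeas hst halive
  unfold terminal at hnt
  push_neg at hnt
  obtain ⟨x₀, hx₀, x₁, hx₁, hedge⟩ := hnt
  obtain ⟨d₀, hd₀conf, hd₀agr, rfl⟩ := hx₀
  obtain ⟨d₁, hd₁conf, hd₁agr, rfl⟩ := hx₁
  obtain ⟨w, hw⟩ := C.hRcomp (C.γseq n) _ _ hedge
  set d : Bool → Cfg := fun i => if i then d₁ else d₀ with hd
  have hdconf : ∀ i, C.Conf n Y (d i) := by intro i; cases i <;> simpa [hd]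
  have hdagr : ∀ i, Agr n c (d i) := by intro i; cases i <;> simpa [hd]
  set c' : Cfg := fun i => match i with
    | Sum.inl us => match us.getLast? with
      | none => c (Sum.inl us)
      | some b => d b (Sum.inl us.dropLast)
    | Sum.inr (k, vs) =>
      if k = n then w
      else match vs.getLast? with
        | none => c (Sum.inr (k, vs))
        | some b => d b (Sum.inr (k, vs.dropLast)) with hc'
  have hA : ∀ (L : List Bool) (i : Bool), c' (Sum.inl (L ++ [i])) = d i (Sum.inl L) := by
    intro L i
    simp [hc', List.getLast?_concat, List.dropLast_concat]
  have hB : ∀ (k : ℕ) (vs : List Bool) (i : Bool), k ≠ n →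
      c' (Sum.inr (k, vs ++ [i])) = d i (Sum.inr (k, vs)) := by
    intro k vs i hk
    simp [hc', hk, List.getLast?_concat, List.dropLast_concat]
  have hC : c' (Sum.inr (n, [])) = w := by simp [hc']
  refine ⟨c', ⟨?_, ?_⟩, ?_, ?_⟩
  · -- points in Y
    intro u' hu'
    have hne : u' ≠ [] := by intro h; rw [h] at hu'; simp at hu'
    have hrep : u'.dropLast ++ [u'.getLast hne] = u' := List.dropLast_append_getLast hne
    rw [← hrep, hA]
    apply (hdconf (u'.getLast hne)).1
    have : u'.dropLast.length = u'.length - 1 := List.length_dropLast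
    omega
  · -- edge conditions
    intro k v' hk hlen
    by_cases hkn : k = n
    · subst hkn
      have hv' : v' = [] := by
        have : v'.length = 0 := by omega
        exact List.length_eq_zero_iff.1 this
      subst hv'
      have he0 : C.estr k false [] = C.sseq k ++ [false] := rfl
      have he1 : C.estr k true [] = C.sseq k ++ [true] := rfl
      rw [he0, he1, hC, hA, hA]
      simpa [hd] using hw
    · have hklt : k < n := by
        rcases Nat.lt_succ_iff_lt_or_eq.1 hk with h | h
        · exact h
        · exact absurd h hkn
      have hvne : v' ≠ [] := by
        intro h
        rw [h] at hlen
        simp at hlen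
        omega
      set b := v'.getLast hvne with hb
      have hrep : v'.dropLast ++ [b] = v' := List.dropLast_append_getLast hvne
      have hel : ∀ i : Bool, C.estr k i v' = C.estr k i v'.dropLast ++ [b] := by
        intro i
        conv_lhs => rw [← hrep]
        simp [estr]
      have hBv : c' (Sum.inr (k, v')) = d b (Sum.inr (k, v'.dropLast)) := by
        conv_lhs => rw [← hrep]
        exact hB k v'.dropLast b hkn
      rw [hBv, hel false, hel true, hA, hA]
      apply (hdconf b).2 k v'.dropLast hklt
      have : v'.dropLast.length = v'.length - 1 := List.length_dropLast
      omega
  · -- Ext, point part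
    intro u hu i j hj
    rw [hA]
    exact hdagr i (Sum.inl u) hu j hj
  · -- Ext, witness part
    intro k v hklt hlen i j hj
    rw [hB k v i (by omega)]
    exact hdagr i (Sum.inr (k, v)) ⟨hklt, hlen⟩ j hj

lemma exists_chain {Y : Set X} (hne : Y.Nonempty) (hmeas : MeasurableSet Y)
    (hst : C.Bad Y ∩ Y = ∅) :
    ∃ cs : ℕ → Cfg, (∀ n, C.Conf n Y (cs n)) ∧ ∀ n, Ext n (cs n) (cs (n+1)) := by
  classical
  obtain ⟨x₀, hx₀⟩ := hne
  obtain ⟨b₀, rfl⟩ := C.hπs x₀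
  have hbase : C.Conf 0 Y (fun _ => b₀) := by
    constructor
    · intro u hu
      exact hx₀
    · intro k v hk
      omega
  let F : ∀ _ : ℕ, {c : Cfg // C.Conf _ Y c} := fun n =>
    Nat.rec (motive := fun n => {c : Cfg // C.Conf n Y c}) ⟨fun _ => b₀, hbase⟩
      (fun n p => ⟨(C.step hmeas hst p.2).choose, (C.step hmeas hst p.2).choose_spec.1⟩) n
  refine ⟨fun n => (F n).1, fun n => (F n).2, fun n => ?_⟩
  exact (C.step hmeas hst (F n).2).choose_spec.2

end Ctx

def prefixList (z : ℕ → Bool) (N : ℕ) : List Bool := List.ofFn fun j : Fin N => z j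

@[simp] lemma prefixList_length (z : ℕ → Bool) (N : ℕ) : (prefixList z N).length = N := by
  simp [prefixList]

lemma prefixList_succ (z : ℕ → Bool) (N : ℕ) :
    prefixList z (N + 1) = prefixList z N ++ [z N] := by
  rw [prefixList, List.ofFn_succ']
  simp [prefixList, List.concat_eq_append]

lemma nat_chain {α : Type*} (f : ℕ → α) (N₁ : ℕ) (hstep : ∀ N, N₁ ≤ N → f (N + 1) = f N) :
    ∀ N, N₁ ≤ N → f N = f N₁ := by
  intro N hN
  induction N, hN using Nat.le_induction with
  | base => rfl
  | succ N hN ih => rw [hstep N hN, ih]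

noncomputable def codeOf (cs : ℕ → Cfg) (z : ℕ → Bool) : Bs := fun m =>
  cs (m + 1) (Sum.inl (prefixList z (m + 1))) m

noncomputable def witOf (cs : ℕ → Cfg) (n : ℕ) (z : ℕ → Bool) : Bs := fun m =>
  cs (n + m + 2) (Sum.inr (n, prefixList z (m + 1))) m

lemma code_stab {cs : ℕ → Cfg} (hext : ∀ n, Ext n (cs n) (cs (n + 1)))
    (z : ℕ → Bool) {N m : ℕ} (h : m < N) :
    cs N (Sum.inl (prefixList z N)) m = codeOf cs z m := by
  have hstep : ∀ K, m + 1 ≤ K →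
      cs (K + 1) (Sum.inl (prefixList z (K + 1))) m = cs K (Sum.inl (prefixList z K)) m := by
    intro K hK
    rw [prefixList_succ]
    exact (hext K).1 (prefixList z K) (prefixList_length z K) (z K) m (by omega)
  exact nat_chain (fun K => cs K (Sum.inl (prefixList z K)) m) (m + 1) hstep N h

lemma wit_stab {cs : ℕ → Cfg} (hext : ∀ n, Ext n (cs n) (cs (n + 1)))
    (n : ℕ) (z : ℕ → Bool) {N m : ℕ} (hm : m < N) (hn : n < N) :
    cs N (Sum.inr (n, prefixList z (N - n - 1))) m = witOf cs n z m := by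
  set f : ℕ → ℕ := fun K => cs K (Sum.inr (n, prefixList z (K - n - 1))) m with hf
  have hstep : ∀ K, max (m + 1) (n + 1) ≤ K → f (K + 1) = f K := by
    intro K hK
    have h1 : K + 1 - n - 1 = (K - n - 1) + 1 := by omega
    rw [hf]
    simp only
    rw [h1, prefixList_succ]
    exact (hext K).2 n (prefixList z (K - n - 1)) (by omega)
      (by simp; omega) (z (K - n - 1)) m (by omega)
  have h1 : f N = f (max (m + 1) (n + 1)) :=
    nat_chain f (max (m + 1) (n + 1)) hstep N (by omega)
  have h2 : f (n + m + 2) = f (max (m + 1) (n + 1)) :=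
    nat_chain f (max (m + 1) (n + 1)) hstep (n + m + 2) (by omega)
  have h3 : witOf cs n z m = f (n + m + 2) := by
    rw [hf]
    simp only
    have he : n + m + 2 - n - 1 = m + 1 := by omega
    rw [he, witOf]
  show f N = witOf cs n z m
  rw [h1, h3, h2]

lemma codeOf_meas (cs : ℕ → Cfg) : Measurable (codeOf cs) := by
  apply measurable_pi_lambda
  intro m
  have h1 : Measurable fun z : ℕ → Bool => (fun j : Fin (m + 1) => z j) :=
    measurable_pi_lambda _ fun j => measurable_pi_apply _
  have h2 : Measurable fun v : Fin (m + 1) → Bool => cs (m + 1) (Sum.inl (List.ofFn v)) m :=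
    measurable_of_countable _
  exact h2.comp h1

namespace Ctx

variable {Γ X : Type*} [MeasurableSpace X] [TopologicalSpace X]
variable [PolishSpace X] [BorelSpace X]
variable (C : Ctx Γ X)

lemma edge_mem {Y : Set X} {cs : ℕ → Cfg} (hconf : ∀ n, C.Conf n Y (cs n))
    (hext : ∀ n, Ext n (cs n) (cs (n + 1))) (n : ℕ) (z y₀ y₁ : ℕ → Bool)
    (h₀ : ∀ N, n < N → prefixList y₀ N = C.estr n false (prefixList z (N - n - 1)))
    (h₁ : ∀ N, n < N → prefixList y₁ N = C.estr n true (prefixList z (N - n - 1))) :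
    (witOf cs n z, codeOf cs y₀, codeOf cs y₁) ∈ C.R (C.γseq n) := by
  set T : ℕ → Bs × Bs × Bs := fun N =>
    (cs N (Sum.inr (n, prefixList z (N - n - 1))),
     cs N (Sum.inl (prefixList y₀ N)), cs N (Sum.inl (prefixList y₁ N))) with hT
  have hmem : ∀ᶠ N in Filter.atTop, T N ∈ C.R (C.γseq n) := by
    rw [Filter.eventually_atTop]
    refine ⟨n + 1, fun N hN => ?_⟩
    have hlen : n + 1 + (prefixList z (N - n - 1)).length = N := by simp; omega
    have := (hconf N).2 n (prefixList z (N - n - 1)) (by omega) hlen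
    rw [hT]
    simp only
    rw [h₀ N (by omega), h₁ N (by omega)]
    exact this
  have htend : Filter.Tendsto T Filter.atTop
      (nhds (witOf cs n z, codeOf cs y₀, codeOf cs y₁)) := by
    refine Filter.Tendsto.prodMk_nhds ?_ (Filter.Tendsto.prodMk_nhds ?_ ?_)
    · rw [tendsto_pi_nhds]
      intro m
      apply Filter.Tendsto.congr' _ tendsto_const_nhds
      rw [Filter.EventuallyEq, Filter.eventually_atTop]
      exact ⟨max (m + 1) (n + 1), fun N hN =>
        (wit_stab hext n z (by omega) (by omega)).symm⟩
    · rw [tendsto_pi_nhds]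
      intro m
      apply Filter.Tendsto.congr' _ tendsto_const_nhds
      rw [Filter.EventuallyEq, Filter.eventually_atTop]
      exact ⟨m + 1, fun N hN => (code_stab hext y₀ (by omega)).symm⟩
    · rw [tendsto_pi_nhds]
      intro m
      apply Filter.Tendsto.congr' _ tendsto_const_nhds
      rw [Filter.EventuallyEq, Filter.eventually_atTop]
      exact ⟨m + 1, fun N hN => (code_stab hext y₁ (by omega)).symm⟩
  exact (C.hRc (C.γseq n)).mem_of_tendsto htend hmem

theorem dichotomy :
    (∃ e : ℕ → Set X × Γ, (∀ m, MeasurableSet (e m).1) ∧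
      (∀ m x y, x ∈ (e m).1 → y ∈ (e m).1 → (C.a (e m).2 x, C.a (e m).2 y) ∉ C.G) ∧
      (∀ x : X, ∃ m, x ∈ (e m).1)) ∨
    (∃ g : (ℕ → Bool) → X, Measurable g ∧
      ∀ (n : ℕ) (z y₀ y₁ : ℕ → Bool),
        (∀ N, n < N → prefixList y₀ N = C.estr n false (prefixList z (N - n - 1))) →
        (∀ N, n < N → prefixList y₁ N = C.estr n true (prefixList z (N - n - 1))) →
        (C.a (C.γseq n) (g y₀), C.a (C.γseq n) (g y₁)) ∈ C.G) := by
  classical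
  obtain ⟨α, hα, hstable⟩ := C.exists_stable
  by_cases hY : (C.Yit α).Nonempty
  · right
    obtain ⟨cs, hconf, hext⟩ := C.exists_chain hY (C.Yit_meas hα) hstable
    refine ⟨fun z => C.π (codeOf cs z), (C.hπc.measurable).comp (codeOf_meas cs), ?_⟩
    intro n z y₀ y₁ h₀ h₁
    exact C.hRsound _ _ _ _ (C.edge_mem hconf hext n z y₀ y₁ h₀ h₁)
  · left
    rw [Set.not_nonempty_iff_eq_empty] at hY
    haveI : Nonempty X := ⟨C.π (fun _ => 0)⟩
    have hcover : ∀ x : X, ∃ (β : {β : Ordinal.{0} // β < α}) (n : ℕ)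
        (c₀ : Set.range (canon n)), x ∈ C.Dch n (c₀ : Cfg) (C.Yit β.1) := by
      intro x
      have hx : x ∉ C.Yit α := by rw [hY]; exact Set.notMem_empty x
      rw [Yit_def] at hx
      have hx2 : x ∈ ⋃ (β : {β : Ordinal // β < α}), C.Bad (C.Yit β.1) := by
        by_contra hnot
        exact hx ⟨Set.mem_univ x, hnot⟩
      rw [Set.mem_iUnion] at hx2
      obtain ⟨β, hβ⟩ := hx2
      rw [Bad, Set.mem_iUnion] at hβ
      obtain ⟨n, hn⟩ := hβ
      rw [Set.mem_iUnion] at hn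
      obtain ⟨c₀, hc₀⟩ := hn
      exact ⟨β, n, c₀, hc₀⟩
    have hαpos : (0 : Ordinal.{0}) < α := by
      rcases eq_zero_or_pos α with h0 | hpos
      · exfalso
        subst h0
        have : C.Yit 0 = Set.univ := by
          rw [Yit_def]
          haveI : IsEmpty {β : Ordinal.{0} // β < 0} :=
            ⟨fun β => not_lt_of_ge (zero_le (a := β.1)) β.2⟩
          simp
        rw [this] at hY
        obtain ⟨x⟩ := ‹Nonempty X›
        exact (Set.eq_empty_iff_forall_notMem.1 hY) x (Set.mem_univ x)
      · exact hpos
    let T := {β : Ordinal.{0} // β < α} × (Σ n : ℕ, Set.range (canon n))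
    haveI : Countable {β : Ordinal.{0} // β < α} := countable_Iio_of_lt_omega1 hα
    haveI : ∀ n, Countable (Set.range (canon n)) := fun n =>
      (countable_range_canon n).to_subtype
    haveI : Countable T := inferInstance
    haveI : Nonempty T :=
      ⟨⟨⟨0, hαpos⟩, ⟨0, ⟨canon 0 (fun _ _ => 0), Set.mem_range_self _⟩⟩⟩⟩
    obtain ⟨f, hf⟩ := exists_surjective_nat T
    refine ⟨fun m => (C.Dch (f m).2.1 ((f m).2.2 : Cfg) (C.Yit (f m).1.1),
      C.γseq (f m).2.1), fun m => C.Dch_meas _ _ _, ?_, ?_⟩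
    · intro m x y hx hy
      exact C.Dch_indep (f m).2.1 ((f m).2.2 : Cfg) (C.Yit (f m).1.1) x hx y hy
    · intro x
      obtain ⟨β, n, c₀, hmem⟩ := hcover x
      obtain ⟨m, hm⟩ := hf ⟨β, ⟨n, c₀⟩⟩
      refine ⟨m, ?_⟩
      have h2 : (((f m).2.2 : Set.range (canon (f m).2.1)) : Cfg) = (c₀ : Cfg) := by
        rw [hm]
      simp only [hm, h2]
      exact hmem

end Ctx

end G0D

namespace G0D

lemma prefix_cat (s : List Bool) (i : Bool) (z : ℕ → Bool) (N : ℕ) (h : s.length < N) :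
    prefixList (Paper.cat (s ++ [i]) z) N = s ++ i :: prefixList z (N - s.length - 1) := by
  apply List.ext_getElem
  · simp [prefixList]
    omega
  · intro j hj hj'
    have hjN : j < N := by simpa [prefixList] using hj
    have hL : (prefixList (Paper.cat (s ++ [i]) z) N)[j] = Paper.cat (s ++ [i]) z j := by
      simp [prefixList]
    rw [hL]
    rcases lt_trichotomy j s.length with hlt | heq | hgt
    · have hcap : j < (s ++ [i]).length := by simp; omega
      have h1 : Paper.cat (s ++ [i]) z j = (s ++ [i])[j]'hcap := by
        simp only [Paper.cat]
        rw [dif_pos hcap]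
        exact List.get_eq_getElem
      have h2 : (s ++ i :: prefixList z (N - s.length - 1))[j] = s[j] :=
        List.getElem_append_left hlt
      have h3 : (s ++ [i])[j]'hcap = s[j] := List.getElem_append_left hlt
      rw [h1, h2, h3]
    · subst heq
      have hcap : s.length < (s ++ [i]).length := by simp
      have h1 : Paper.cat (s ++ [i]) z s.length = (s ++ [i])[s.length]'hcap := by
        simp only [Paper.cat]
        rw [dif_pos hcap]
        exact List.get_eq_getElem
      have h2 : (s ++ [i])[s.length]'hcap = i := by
        rw [List.getElem_append_right (le_refl s.length)]
        simp
      have h3 : (s ++ i :: prefixList z (N - s.length - 1))[s.length]'(by assumption) = i := by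
        rw [List.getElem_append_right (le_refl s.length)]
        simp
      rw [h1, h2, h3]
    · have hcap : ¬ j < (s ++ [i]).length := by simp; omega
      have h1 : Paper.cat (s ++ [i]) z j = z (j - (s.length + 1)) := by
        simp only [Paper.cat, List.length_append, List.length_cons]
        rw [dif_neg (by simpa using hcap)]
        congr 1
      have h2 : (s ++ i :: prefixList z (N - s.length - 1))[j]'(by assumption) =
          (i :: prefixList z (N - s.length - 1))[j - s.length]'(by simp [prefixList]; omega) :=
        List.getElem_append_right (by omega)
      have h3 : (i :: prefixList z (N - s.length - 1))[j - s.length]'(by simp [prefixList]; omega) =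
          (prefixList z (N - s.length - 1))[j - s.length - 1]'(by simp [prefixList]; omega) := by
        rw [List.getElem_cons]
        split
        · omega
        · rfl
      have h4 : (prefixList z (N - s.length - 1))[j - s.length - 1]'(by simp [prefixList]; omega) =
          z (j - s.length - 1) := by
        simp [prefixList]
      rw [h1, h2, h3, h4]
      congr 1

end G0D

open Paper

open G0D in
/-- The equivariant `G₀` dichotomy: for a Borel graph `G` on a standard Borel
space `X` and a Borel action `a` of a countable group `Γ` on `X`, either `(G, a)`
admits a Borel a-coloring, or there is a Borel equivariant homomorphism from
`(G_Γ, a_Γ)` to `(G, a)`. -/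
theorem equivariant_G0_dichotomy {Γ X : Type*} [Group Γ] [Countable Γ]
    [MeasurableSpace Γ] [DiscreteMeasurableSpace Γ]
    [MeasurableSpace X] [StandardBorelSpace X]
    (G : Set (X × X)) (hG : IsGraph G) (hGBorel : MeasurableSet G)
    (a : Γ → X → X) (haBorel : ∀ γ : Γ, Measurable (a γ))
    (haOne : ∀ x, a 1 x = x) (haMul : ∀ γ δ x, a (γ * δ) x = a γ (a δ x))
    (γseq : ℕ → Γ) (sseq : ℕ → List Bool) (hgen : GenericSeq γseq sseq) :
    (∃ f : X → ℕ × Γ, IsBorelAColoring G a f) ∨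
    ∃ F : Γ × (ℕ → Bool) → X, Measurable F ∧
      (∀ (h : Γ) (p : Γ × (ℕ → Bool)), F (aGamma h p) = a h (F p)) ∧
      ∀ p q : Γ × (ℕ → Bool), (p, q) ∈ GGamma γseq sseq → (F p, F q) ∈ G := by

  classical
  rcases isEmpty_or_nonempty X with hX | hX
  · left
    refine ⟨fun _ => (0, 1), ?_, ?_⟩
    · intro s _
      have : (fun _ : X => ((0 : ℕ), (1 : Γ))) ⁻¹' s = ∅ ∨
          (fun _ : X => ((0 : ℕ), (1 : Γ))) ⁻¹' s = Set.univ := by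
        rcases Set.eq_empty_or_nonempty ((fun _ : X => ((0 : ℕ), (1 : Γ))) ⁻¹' s) with h | h
        · exact Or.inl h
        · exact Or.inr (Set.eq_univ_of_forall fun x => (hX.false x).elim)
      rcases this with h | h <;> rw [h]
      · exact MeasurableSet.empty
      · exact MeasurableSet.univ
    · intro n y
      exact (hX.false y).elim
  · -- upgrade to a Polish topology
    obtain ⟨τ, hborel, hpolish⟩ := StandardBorelSpace.polish (α := X)
    letI := τ
    haveI := hborel
    haveI := hpolish
    obtain ⟨π, hπc, hπs⟩ := PolishSpace.exists_nat_nat_continuous_surjective X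
    -- construct the closed witness relations
    have hRex : ∀ γ : Γ, ∃ R : Set (G0D.Bs × G0D.Bs × G0D.Bs), IsClosed R ∧
        (∀ w b₀ b₁, (w, b₀, b₁) ∈ R → (a γ (π b₀), a γ (π b₁)) ∈ G) ∧
        (∀ b₀ b₁, (a γ (π b₀), a γ (π b₁)) ∈ G → ∃ w, (w, b₀, b₁) ∈ R) := by
      intro γ
      set Ht : Set (G0D.Bs × G0D.Bs) := {p | (a γ (π p.1), a γ (π p.2)) ∈ G} with hHt
      have hmeas : MeasurableSet Ht := by
        have hm : Measurable fun p : G0D.Bs × G0D.Bs => (a γ (π p.1), a γ (π p.2)) :=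
          (((haBorel γ).comp (hπc.measurable.comp measurable_fst))).prodMk
            (((haBorel γ).comp (hπc.measurable.comp measurable_snd)))
        exact hm hGBorel
      haveI : PolishSpace (G0D.Bs × G0D.Bs) := inferInstance
      by_cases hemp : Ht = ∅
      · refine ⟨∅, isClosed_empty, by simp, fun b₀ b₁ hb => ?_⟩
        have : (b₀, b₁) ∈ Ht := hb
        rw [hemp] at this
        exact absurd this (Set.notMem_empty _)
      · have han : MeasureTheory.AnalyticSet Ht := hmeas.analyticSet
        rw [MeasureTheory.AnalyticSet] at han
        rcases han with h | ⟨f, hfc, hfr⟩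
        · exact absurd h hemp
        · refine ⟨{t : G0D.Bs × G0D.Bs × G0D.Bs | f t.1 = (t.2.1, t.2.2)}, ?_, ?_, ?_⟩
          · exact isClosed_eq (hfc.comp continuous_fst)
              ((continuous_fst.comp continuous_snd).prodMk
                (continuous_snd.comp continuous_snd))
          · intro w b₀ b₁ hw
            have : (b₀, b₁) ∈ Set.range f := ⟨w, hw⟩
            rw [hfr] at this
            exact this
          · intro b₀ b₁ hb
            have : (b₀, b₁) ∈ Ht := hb
            rw [← hfr] at this
            obtain ⟨w, hw⟩ := this
            exact ⟨w, hw⟩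
    choose R hRc hRsound hRcomp using hRex
    set C : G0D.Ctx Γ X :=
      { G := G, a := a, γseq := γseq, sseq := sseq, π := π, R := R,
        hGmeas := hGBorel, hGsym := hG.1, haMeas := haBorel, hslen := hgen.1,
        hπc := hπc, hπs := hπs, hRc := hRc, hRsound := hRsound, hRcomp := hRcomp } with hC
    rcases C.dichotomy with ⟨e, hemeas, hind, hcov⟩ | ⟨g, hgmeas, hedge⟩
    · -- coloring case
      left
      have hcov' : ∀ x : X, ∃ m, x ∈ (e m).1 := hcov
      refine ⟨fun x => (Nat.find (hcov' x), (e (Nat.find (hcov' x))).2), ?_, ?_⟩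
      · apply measurable_to_countable'
        rintro ⟨m, h⟩
        by_cases hmh : (e m).2 = h
        · have : (fun x => ((Nat.find (hcov' x), (e (Nat.find (hcov' x))).2) : ℕ × Γ)) ⁻¹'
              {(m, h)} = (e m).1 ∩ ⋂ (j : ℕ) (_ : j < m), ((e j).1)ᶜ := by
            ext x
            simp only [Set.mem_preimage, Set.mem_singleton_iff, Prod.mk.injEq,
              Set.mem_inter_iff, Set.mem_iInter, Set.mem_compl_iff]
            constructor
            · rintro ⟨h1, _⟩
              have := Nat.find_eq_iff (hcov' x) |>.1 h1
              exact ⟨this.1, fun j hj => this.2 j hj⟩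
            · rintro ⟨h1, h2⟩
              have hfind : Nat.find (hcov' x) = m :=
                (Nat.find_eq_iff (hcov' x)).2 ⟨h1, h2⟩
              exact ⟨hfind, by rw [hfind]; exact hmh⟩
          rw [this]
          exact (hemeas m).inter
            (MeasurableSet.iInter fun j => MeasurableSet.iInter fun _ => (hemeas j).compl)
        · have : (fun x => ((Nat.find (hcov' x), (e (Nat.find (hcov' x))).2) : ℕ × Γ)) ⁻¹'
              {(m, h)} = ∅ := by
            ext x
            simp only [Set.mem_preimage, Set.mem_singleton_iff, Prod.mk.injEq,
              Set.mem_empty_iff_false, iff_false, not_and]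
            intro h1
            rw [h1]
            exact hmh
          rw [this]
          exact MeasurableSet.empty
      · intro n y y' h h' hy hy'
        rw [Prod.mk.injEq] at hy hy'
        obtain ⟨hy1, hy2⟩ := hy
        obtain ⟨hy1', hy2'⟩ := hy'
        have hmem : y ∈ (e n).1 := by rw [← hy1]; exact Nat.find_spec (hcov' y)
        have hmem' : y' ∈ (e n).1 := by rw [← hy1']; exact Nat.find_spec (hcov' y')
        have hres := hind n y y' hmem hmem'
        rw [hy1] at hy2
        rw [hy1'] at hy2'
        rw [← hy2, ← hy2']
        exact hres
    · -- homomorphism case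
      right
      refine ⟨fun p => a p.1 (g p.2), ?_, ?_, ?_⟩
      · have hf : Measurable fun q : (ℕ → Bool) × Γ => a q.2 (g q.1) := by
          apply measurable_from_prod_countable_left
          intro γ
          exact (haBorel γ).comp hgmeas
        have heq : (fun p : Γ × (ℕ → Bool) => a p.1 (g p.2)) =
            (fun q : (ℕ → Bool) × Γ => a q.2 (g q.1)) ∘ Prod.swap := rfl
        rw [heq]
        exact hf.comp measurable_swap
      · intro h p
        simp only [aGamma]
        exact haMul h p.1 (g p.2)
      · intro p q hpq
        obtain ⟨h1, n, z, hγ, hcase⟩ := hpq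
        have hlen := hgen.1 n
        have hy : ∀ (i : Bool), ∀ N, n < N →
            prefixList (cat (sseq n ++ [i]) z) N =
              C.estr n i (prefixList z (N - n - 1)) := by
          intro i N hN
          have hpc := prefix_cat (sseq n) i z N (by rw [hlen]; exact hN)
          rw [hpc]
          have h2 : N - (sseq n).length - 1 = N - n - 1 := by rw [hlen]
          rw [h2]
          rfl
        have hkey := hedge n z (cat (sseq n ++ [false]) z) (cat (sseq n ++ [true]) z)
          (hy false) (hy true)
        show (a p.1 (g p.2), a q.1 (g q.2)) ∈ G
        rcases hcase with ⟨hp2, hq2⟩ | ⟨hp2, hq2⟩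
        · rw [hp2, hq2, ← h1, ← hγ]
          exact hkey
        · rw [hp2, hq2, ← h1, ← hγ]
          exact hG.1 _ _ hkey
end

section
/- Let Γ ⊆ Aut(Cay(ℤ², E)) be a subgroup such that γ(0) = 0 for all γ ∈ Γ and ⟨γ(n,m)⟩⁻¹ γ ⟨n,m⟩ ∈ Γ for all γ ∈ Γ and (n,m) ∈ ℤ². Then for every x ∈ Fr_Γ, the map (a, b) ↦ [⟨a,b⟩ · x] is a graph isomorphism from Cay(ℤ², E) onto the connected component of [x] in S̃_Γ; in particular, S̃_Γ is locally a square lattice. -/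
namespace Paper

variable {X Y : Type*}

/-- A (simple, directed) path in a graph, as a nonempty list of distinct
consecutively-adjacent vertices. -/
def IsPathL (G : Set (X × X)) (p : List X) : Prop :=
  p ≠ [] ∧ p.Nodup ∧ p.Chain' fun a b => (a, b) ∈ G

/-- A straight line (segment): a directed path such that no other path of the same
or shorter length has the same endpoints. -/
def IsStraight (G : Set (X × X)) (p : List X) : Prop :=
  IsPathL G p ∧ ∀ q : List X, IsPathL G q → q.head? = p.head? →
    q.getLast? = p.getLast? → q.length ≤ p.length → q = p

/-- The directed edges `e` and `e'` lie on a common straight line. -/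
def OnLine (G : Set (X × X)) (e e' : X × X) : Prop :=
  ∃ p, IsStraight G p ∧ [e.1, e.2] <:+: p ∧ [e'.1, e'.2] <:+: p

/-- The vertices `x` and `y` lie on a common straight line. -/
def VertsOnLine (G : Set (X × X)) (x y : X) : Prop :=
  ∃ p, IsStraight G p ∧ x ∈ p ∧ y ∈ p

/-- A rectangle: a simple directed cycle divided into 4 straight lines. -/
def IsRect (G : Set (X × X)) (p₁ p₂ p₃ p₄ : List X) : Prop :=
  IsStraight G p₁ ∧ IsStraight G p₂ ∧ IsStraight G p₃ ∧ IsStraight G p₄ ∧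
  p₁.getLast? = p₂.head? ∧ p₂.getLast? = p₃.head? ∧
  p₃.getLast? = p₄.head? ∧ p₄.getLast? = p₁.head? ∧
  (p₁ ++ p₂.tail ++ p₃.tail ++ p₄.tail).dropLast.Nodup

/-- `e ∥ e'`: the directed edges lie on a common straight line, or `-e` and `e'`
are opposite sides of a rectangle. -/
def Parallel (G : Set (X × X)) (e e' : X × X) : Prop :=
  OnLine G e e' ∨
  ∃ p₁ p₂ p₃ p₄, IsRect G p₁ p₂ p₃ p₄ ∧
    (([e.2, e.1] <:+: p₁ ∧ [e'.1, e'.2] <:+: p₃) ∨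
     ([e.2, e.1] <:+: p₃ ∧ [e'.1, e'.2] <:+: p₁) ∨
     ([e.2, e.1] <:+: p₂ ∧ [e'.1, e'.2] <:+: p₄) ∨
     ([e.2, e.1] <:+: p₄ ∧ [e'.1, e'.2] <:+: p₂))

/-- `e ⊥ e'`: directed edges of `G` in the same component which are neither
parallel nor anti-parallel. -/
def Perp (G : Set (X × X)) (e e' : X × X) : Prop :=
  e ∈ G ∧ e' ∈ G ∧ Conn G e.1 e'.1 ∧ ¬ Parallel G e e' ∧ ¬ Parallel G (neg e) e'

/-- Adjacency in the Cayley graph of `ℤ²` with the standard generating set. -/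
def LatAdj (p q : ℤ × ℤ) : Prop :=
  q = p + (1, 0) ∨ q = p + (-1, 0) ∨ q = p + (0, 1) ∨ q = p + (0, -1)

/-- A graph is locally a square lattice if every connected component is
isomorphic to the Cayley graph of `ℤ²` with the standard generating set. -/
def LocallySquareLattice (G : Set (X × X)) : Prop :=
  ∀ x : X, ∃ φ : ℤ × ℤ → X, Function.Injective φ ∧ φ 0 = x ∧
    (∀ p q, LatAdj p q ↔ (φ p, φ q) ∈ G) ∧
    ∀ y, Conn G x y → ∃ p, φ p = y

/-- A Borel 2-coloring of the perpendicularity graph `⊥_G`. -/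
def HasBorelTwoColoring [MeasurableSpace X] (G : Set (X × X)) : Prop :=
  ∃ c : X × X → Bool, Measurable c ∧ ∀ e e', Perp G e e' → c e ≠ c e'

/-- The standard generating set of `ℤ²`. -/
def stdGen : Set (ℤ × ℤ) := {(1, 0), (-1, 0), (0, 1), (0, -1)}

/-- `G` is the Schreier graph of a free Borel action of `ℤ²` (with the standard
generating set). -/
def IsSchreierZ2 [MeasurableSpace X] (G : Set (X × X)) : Prop :=
  ∃ a : ℤ × ℤ → X → X,
    (∀ g, Measurable (a g)) ∧
    (∀ x, a 0 x = x) ∧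
    (∀ g h x, a (g + h) x = a g (a h x)) ∧
    (∀ g x, a g x = x → g = 0) ∧
    G = {p | ∃ g ∈ stdGen, p.2 = a g p.1}

end Paper
namespace Paper

/-- The automorphism group of the Cayley graph of `ℤ²` (with the standard
generating set), as a subgroup of the permutations of `ℤ²`. -/
def latAut : Subgroup (Equiv.Perm (ℤ × ℤ)) where
  carrier := {γ | ∀ p q, LatAdj p q ↔ LatAdj (γ p) (γ q)}
  one_mem' := by intro p q; exact Iff.rfl
  mul_mem' := by
    intro a b ha hb p q
    simpa [Equiv.Perm.mul_apply] using (hb p q).trans (ha (b p) (b q))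
  inv_mem' := by
    intro a ha p q
    simpa using (ha (a⁻¹ p) (a⁻¹ q)).symm

/-- The translation automorphism `⟨v⟩` of the Cayley graph of `ℤ²`. -/
def trAut (v : ℤ × ℤ) : Equiv.Perm (ℤ × ℤ) := Equiv.addLeft v

/-- The shift action of `Aut(Cay(ℤ², E))` on `[0,1]^{ℤ²}`: `γ · x = x ∘ γ⁻¹`. -/
def shiftI (g : Equiv.Perm (ℤ × ℤ)) (x : (ℤ × ℤ) → unitInterval) :
    (ℤ × ℤ) → unitInterval := fun p => x (g⁻¹ p)

/-- The free part of the shift action of `Aut(Cay(ℤ², E))` on `[0,1]^{ℤ²}`. -/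
def FrSet : Set ((ℤ × ℤ) → unitInterval) :=
  {x | ∀ g ∈ latAut, g ≠ 1 → shiftI g x ≠ x}

/-- A point of the free part. -/
abbrev FrPt : Type := {x : (ℤ × ℤ) → unitInterval // x ∈ FrSet}

/-- The orbit equivalence relation of (the restriction to) `Γ` on the free part. -/
def frSetoid (Γ : Subgroup (Equiv.Perm (ℤ × ℤ))) : Setoid FrPt where
  r x y := ∃ γ ∈ Γ, shiftI γ x.val = y.val
  iseqv := by
    constructor
    · intro x
      exact ⟨1, Γ.one_mem, by funext p; simp [shiftI]⟩
    · rintro x y ⟨γ, hγ, h⟩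
      refine ⟨γ⁻¹, Γ.inv_mem hγ, ?_⟩
      funext p
      rw [← h]
      simp [shiftI]
    · rintro x y z ⟨γ, hγ, h⟩ ⟨δ, hδ, h'⟩
      refine ⟨δ * γ, Γ.mul_mem hδ hγ, ?_⟩
      rw [← h', ← h]
      funext p
      simp [shiftI, mul_inv_rev, Equiv.Perm.mul_apply]

/-- The graph `S̃_Γ` on `Fr_Γ/Γ`, with edges `([x], [⟨v⟩ · x])` for `v` in the
standard generating set. -/
def Stilde (Γ : Subgroup (Equiv.Perm (ℤ × ℤ))) :
    Set (Quotient (frSetoid Γ) × Quotient (frSetoid Γ)) :=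
  {p | ∃ (x : FrPt) (v : ℤ × ℤ), v ∈ stdGen ∧
    ∃ hv : shiftI (trAut v) x.val ∈ FrSet,
      p.1 = Quotient.mk (frSetoid Γ) x ∧
      p.2 = Quotient.mk (frSetoid Γ) ⟨shiftI (trAut v) x.val, hv⟩}

end Paper

open Paper

section Helpers

lemma shiftI_mul (g h : Equiv.Perm (ℤ × ℤ)) (x : (ℤ × ℤ) → unitInterval) :
    shiftI (g * h) x = shiftI g (shiftI h x) := by
  funext p; simp [shiftI, mul_inv_rev, Equiv.Perm.mul_apply]

lemma shiftI_one (x : (ℤ × ℤ) → unitInterval) : shiftI 1 x = x := by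
  funext p; simp [shiftI]

lemma trAut_apply (v p : ℤ × ℤ) : trAut v p = v + p := rfl

lemma trAut_add (v w : ℤ × ℤ) : trAut (v + w) = trAut v * trAut w :=
  Equiv.ext fun p => add_assoc v w p

lemma trAut_zero : trAut (0 : ℤ × ℤ) = 1 :=
  Equiv.ext fun p => zero_add p

lemma trAut_neg (v : ℤ × ℤ) : trAut (-v) = (trAut v)⁻¹ := by
  rw [eq_inv_iff_mul_eq_one, ← trAut_add, neg_add_cancel, trAut_zero]

lemma latAdj_add_left (v p q : ℤ × ℤ) : LatAdj (v + p) (v + q) ↔ LatAdj p q := by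
  simp only [LatAdj, add_assoc, add_right_inj]

lemma trAut_mem (v : ℤ × ℤ) : trAut v ∈ latAut := by
  intro p q
  exact (latAdj_add_left v p q).symm

lemma latAdj_zero (s : ℤ × ℤ) : LatAdj 0 s ↔ s ∈ stdGen := by
  simp [LatAdj, stdGen]

lemma fr_shift {x : (ℤ × ℤ) → unitInterval} (hx : x ∈ FrSet)
    {g : Equiv.Perm (ℤ × ℤ)} (hg : g ∈ latAut) : shiftI g x ∈ FrSet := by
  intro h hh hne heq
  refine hx (g⁻¹ * h * g) (mul_mem (mul_mem (inv_mem hg) hh) hg) ?_ ?_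
  · intro h1
    apply hne
    have : g * (g⁻¹ * h * g) * g⁻¹ = g * 1 * g⁻¹ := by rw [h1]
    simpa [mul_assoc] using this
  · rw [shiftI_mul, shiftI_mul, heq, ← shiftI_mul, inv_mul_cancel, shiftI_one]

lemma fr_free {x : (ℤ × ℤ) → unitInterval} (hx : x ∈ FrSet)
    {g h : Equiv.Perm (ℤ × ℤ)} (hg : g ∈ latAut) (hh : h ∈ latAut)
    (heq : shiftI g x = shiftI h x) : g = h := by
  by_contra hne
  refine hx (h⁻¹ * g) (mul_mem (inv_mem hh) hg) ?_ ?_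
  · intro h1
    exact hne (by rwa [inv_mul_eq_one, eq_comm] at h1)
  · rw [shiftI_mul, heq, ← shiftI_mul, inv_mul_cancel, shiftI_one]

end Helpers


/-- For a subgroup `Γ` of `Aut(Cay(ℤ², E))` fixing `0` and closed under conjugation
by translations, for every `x` in the free part the map `v ↦ [⟨v⟩ · x]` is a graph
isomorphism from `Cay(ℤ², E)` onto the connected component of `[x]` in `S̃_Γ`; in
particular, `S̃_Γ` is locally a square lattice. -/
theorem Stilde_locally_square_lattice (Γ : Subgroup (Equiv.Perm (ℤ × ℤ)))
    (hΓAut : Γ ≤ latAut)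
    (hfix : ∀ γ ∈ Γ, γ (0 : ℤ × ℤ) = 0)
    (hconj : ∀ γ ∈ Γ, ∀ v : ℤ × ℤ, (trAut (γ v))⁻¹ * γ * trAut v ∈ Γ) :
    (∀ x : FrPt, ∃ φ : ℤ × ℤ → Quotient (frSetoid Γ),
      (∀ v : ℤ × ℤ, ∃ hv : shiftI (trAut v) x.val ∈ FrSet,
        φ v = Quotient.mk (frSetoid Γ) ⟨shiftI (trAut v) x.val, hv⟩) ∧
      Function.Injective φ ∧
      φ 0 = Quotient.mk (frSetoid Γ) x ∧
      (∀ v w : ℤ × ℤ, LatAdj v w ↔ (φ v, φ w) ∈ Stilde Γ) ∧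
      ∀ y, Conn (Stilde Γ) (Quotient.mk (frSetoid Γ) x) y → ∃ v, φ v = y) ∧
    LocallySquareLattice (Stilde Γ) := by

  have sound : ∀ a b : FrPt, (frSetoid Γ).r a b →
      Quotient.mk (frSetoid Γ) a = Quotient.mk (frSetoid Γ) b :=
    fun _ _ h => Quotient.sound h
  have exact : ∀ a b : FrPt,
      Quotient.mk (frSetoid Γ) a = Quotient.mk (frSetoid Γ) b →
      (frSetoid Γ).r a b :=
    fun _ _ h => Quotient.exact h
  have main : ∀ x : FrPt, ∃ φ : ℤ × ℤ → Quotient (frSetoid Γ),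
      (∀ v : ℤ × ℤ, ∃ hv : shiftI (trAut v) x.val ∈ FrSet,
        φ v = Quotient.mk (frSetoid Γ) ⟨shiftI (trAut v) x.val, hv⟩) ∧
      Function.Injective φ ∧
      φ 0 = Quotient.mk (frSetoid Γ) x ∧
      (∀ v w : ℤ × ℤ, LatAdj v w ↔ (φ v, φ w) ∈ Stilde Γ) ∧
      ∀ y, Conn (Stilde Γ) (Quotient.mk (frSetoid Γ) x) y → ∃ v, φ v = y := by
    intro x
    have hmem : ∀ v : ℤ × ℤ, shiftI (trAut v) x.val ∈ FrSet := fun v =>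
      fr_shift x.prop (trAut_mem v)
    refine ⟨fun v => Quotient.mk (frSetoid Γ) ⟨shiftI (trAut v) x.val, hmem v⟩,
      fun v => ⟨hmem v, rfl⟩, ?_, ?_, ?_, ?_⟩
    · -- injectivity
      intro v w h
      obtain ⟨γ, hγ, hγeq⟩ := exact _ _ h
      have hgr : γ * trAut v = trAut w := by
        refine fr_free x.prop (mul_mem (hΓAut hγ) (trAut_mem v)) (trAut_mem w) ?_
        rw [shiftI_mul, hγeq]
      have := congrArg (fun g : Equiv.Perm (ℤ × ℤ) => g (-v)) hgr
      simp only [Equiv.Perm.mul_apply, trAut_apply, add_neg_cancel,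
        hfix γ hγ] at this
      have hwv : w = v := by
        have h2 := congrArg (fun p : ℤ × ℤ => p + v) this.symm
        simpa [add_assoc] using h2
      exact hwv.symm
    · -- φ 0 = [x]
      refine sound _ _ ⟨1, Γ.one_mem, ?_⟩
      show shiftI 1 (shiftI (trAut 0) x.val) = x.val
      rw [shiftI_one, trAut_zero, shiftI_one]
    · -- adjacency
      intro v w
      constructor
      · rintro hadj
        have hs : ∃ s ∈ stdGen, w = v + s := by
          rcases hadj with h | h | h | h
          · exact ⟨(1, 0), by simp [stdGen], h⟩
          · exact ⟨(-1, 0), by simp [stdGen], h⟩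
          · exact ⟨(0, 1), by simp [stdGen], h⟩
          · exact ⟨(0, -1), by simp [stdGen], h⟩
        obtain ⟨s, hsmem, rfl⟩ := hs
        refine ⟨⟨shiftI (trAut v) x.val, hmem v⟩, s, hsmem,
          ?_, rfl, ?_⟩
        · rw [← shiftI_mul, ← trAut_add]
          exact hmem _
        · refine sound _ _ ⟨1, Γ.one_mem, ?_⟩
          show shiftI 1 (shiftI (trAut (v + s)) x.val) =
            shiftI (trAut s) (shiftI (trAut v) x.val)
          rw [shiftI_one, ← shiftI_mul, ← trAut_add, add_comm v s]
      · rintro ⟨x', a, ha, hva, h1, h2⟩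
        simp only at h1 h2
        obtain ⟨γ, hγ, hγeq0⟩ := exact _ _ h1
        obtain ⟨δ, hδ, hδeq0⟩ := exact _ _ h2
        have hγeq : shiftI γ (shiftI (trAut v) x.val) = x'.val := hγeq0
        have hδeq : shiftI δ (shiftI (trAut w) x.val) =
          shiftI (trAut a) x'.val := hδeq0
        have hgr : δ * trAut w = trAut a * γ * trAut v := by
          refine fr_free x.prop
            (mul_mem (hΓAut hδ) (trAut_mem w))
            (mul_mem (mul_mem (trAut_mem a) (hΓAut hγ)) (trAut_mem v)) ?_
          rw [shiftI_mul, hδeq, shiftI_mul, shiftI_mul, hγeq]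
        have heval := congrArg (fun g : Equiv.Perm (ℤ × ℤ) => g (-v)) hgr
        simp only [Equiv.Perm.mul_apply, trAut_apply, add_neg_cancel,
          hfix γ hγ, add_zero] at heval
        -- heval : δ (w + -v) = a
        have h0a : LatAdj 0 a := (latAdj_zero a).mpr ha
        have hδinv : δ⁻¹ ∈ Γ := inv_mem hδ
        have h0 : LatAdj 0 (w + -v) := by
          have := (hΓAut hδinv 0 a).mp ?_
          · rwa [hfix δ⁻¹ hδinv, ← heval, Equiv.Perm.inv_def, Equiv.symm_apply_apply] at this
          · exact h0a
        have := (latAdj_add_left v 0 (w + -v)).mpr h0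
        simpa [add_comm, add_assoc, add_left_comm] using this
    · -- components
      intro y hy
      induction hy with
      | refl =>
        refine ⟨0, sound _ _ ⟨1, Γ.one_mem, ?_⟩⟩
        show shiftI 1 (shiftI (trAut 0) x.val) = x.val
        rw [shiftI_one, trAut_zero, shiftI_one]
      | tail hbc hedge ih =>
        obtain ⟨v, rfl⟩ := ih
        obtain ⟨x', a, ha, hva, h1, h2⟩ := hedge
        simp only at h1 h2
        obtain ⟨γ, hγ, hγeq0⟩ := exact _ _ h1
        have hγeq : shiftI γ (shiftI (trAut v) x.val) = x'.val := hγeq0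
        have hσ := hconj γ⁻¹ (inv_mem hγ) (-a)
        set σ := (trAut (γ⁻¹ (-a)))⁻¹ * γ⁻¹ * trAut (-a) with hσdef
        refine ⟨-(γ⁻¹ (-a)) + v, ?_⟩
        rw [h2]
        refine sound _ _ ⟨σ⁻¹, inv_mem hσ, ?_⟩
        show shiftI σ⁻¹ (shiftI (trAut (-(γ⁻¹ (-a)) + v)) x.val) =
          shiftI (trAut a) x'.val
        have key : σ⁻¹ * trAut (-(γ⁻¹ (-a)) + v) = trAut a * γ * trAut v := by
          rw [hσdef, trAut_add, trAut_neg, trAut_neg]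
          group
        calc shiftI σ⁻¹ (shiftI (trAut (-(γ⁻¹ (-a)) + v)) x.val)
            = shiftI (σ⁻¹ * trAut (-(γ⁻¹ (-a)) + v)) x.val := (shiftI_mul _ _ _).symm
          _ = shiftI (trAut a * γ * trAut v) x.val := by rw [key]
          _ = shiftI (trAut a) x'.val := by
              rw [shiftI_mul, shiftI_mul, hγeq]
  refine ⟨main, ?_⟩
  intro y
  obtain ⟨x, rfl⟩ := Quotient.exists_rep y
  obtain ⟨φ, hφ1, hφ2, hφ3, hφ4, hφ5⟩ := main x
  exact ⟨φ, hφ2, hφ3, hφ4, hφ5⟩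
end

section
/- Let E be a Borel equivalence relation on a Polish space X. Then there is a Borel function f : X → 2^ω with x E y ⟺ f(x) = f(y) for all x, y ∈ X (i.e., E is Borel reducible to equality on 2^ω) if and only if the complement of E in X × X is a union of countably many Borel rectangles A_i × B_i with (A_i × B_i) ∩ E = ∅ for every i. -/
open Set MeasureTheory

/-- Invariant separation: given a Borel equivalence relation and a Borel rectangle avoiding it,
we can find a Borel E-invariant set containing `A` and disjoint from `B`. -/
theorem invariant_separation
    {X : Type*} [TopologicalSpace X] [PolishSpace X]
    [MeasurableSpace X] [BorelSpace X]
    (E : Set (X × X)) (hEBorel : MeasurableSet E)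
    (hEequiv : Equivalence fun x y => (x, y) ∈ E)
    (A B : Set X) (hA : MeasurableSet A) (hB : MeasurableSet B)
    (hdisj : (A ×ˢ B) ∩ E = ∅) :
    ∃ C : Set X, MeasurableSet C ∧ A ⊆ C ∧
      (∀ x y, (x, y) ∈ E → (x ∈ C ↔ y ∈ C)) ∧ ∀ b ∈ B, b ∉ C := by
  classical
  -- saturation
  set sat : Set X → Set X := fun S => {x | ∃ s ∈ S, (x, s) ∈ E} with hsat
  have hsat_mem : ∀ S x, x ∈ sat S ↔ ∃ s ∈ S, (x, s) ∈ E := fun S x => Iff.rfl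
  have hsub_sat : ∀ S, S ⊆ sat S := fun S x hx => ⟨x, hx, hEequiv.refl x⟩
  have hsat_analytic : ∀ S : Set X, MeasurableSet S → AnalyticSet (sat S) := by
    intro S hS
    have himg : sat S = Prod.fst '' (E ∩ (univ ×ˢ S)) := by
      ext z
      constructor
      · rintro ⟨s, hs, hzs⟩
        exact ⟨(z, s), ⟨hzs, ⟨trivial, hs⟩⟩, rfl⟩
      · rintro ⟨⟨a, b⟩, ⟨hab, ⟨-, hb⟩⟩, rfl⟩
        exact ⟨b, hb, hab⟩
    rw [himg]
    exact ((hEBorel.inter (MeasurableSet.univ.prod hS)).analyticSet).image_of_continuous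
      continuous_fst
  -- disjointness of saturations
  have hdisjAB : Disjoint (sat B) (sat A) := by
    rw [Set.disjoint_left]
    rintro z ⟨b, hb, hzb⟩ ⟨a, ha, hza⟩
    have : (a, b) ∈ (A ×ˢ B) ∩ E :=
      ⟨⟨ha, hb⟩, hEequiv.trans (hEequiv.symm hza) hzb⟩
    rw [hdisj] at this; exact this
  have hsatB_inv : ∀ x y, (x, y) ∈ E → y ∈ sat B → x ∈ sat B := by
    rintro x y hxy ⟨b, hb, hyb⟩
    exact ⟨b, hb, hEequiv.trans hxy hyb⟩
  -- step: separate saturation of a measurable set disjoint from sat B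
  have key : ∀ u : Set X, ∃ v : Set X,
      (MeasurableSet u ∧ Disjoint (sat B) u) →
      (sat u ⊆ v ∧ Disjoint (sat B) v ∧ MeasurableSet v) := by
    intro u
    by_cases h : MeasurableSet u ∧ Disjoint (sat B) u
    · obtain ⟨hu, hud⟩ := h
      have hd : Disjoint (sat u) (sat B) := by
        rw [Set.disjoint_left]
        rintro z ⟨c, hc, hzc⟩ hzB
        exact Set.disjoint_left.1 hud (hsatB_inv c z (hEequiv.symm hzc) hzB) hc
      obtain ⟨v, hv1, hv2, hv3⟩ :=
        (hsat_analytic u hu).measurablySeparable (hsat_analytic B hB) hd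
      exact ⟨v, fun _ => ⟨hv1, hv2, hv3⟩⟩
    · exact ⟨∅, fun h' => absurd h' h⟩
  choose g hg using key
  -- initial set
  have hd0 : Disjoint (sat A) (sat B) := hdisjAB.symm
  obtain ⟨C0, hC01, hC02, hC03⟩ :=
    (hsat_analytic A hA).measurablySeparable (hsat_analytic B hB) hd0
  -- iterate
  set seq : ℕ → Set X := fun n => g^[n] C0 with hseq
  have hseq_succ : ∀ n, seq (n + 1) = g (seq n) := by
    intro n
    simp [hseq, Function.iterate_succ_apply']
  have hinv : ∀ n, MeasurableSet (seq n) ∧ Disjoint (sat B) (seq n) := by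
    intro n
    induction n with
    | zero => exact ⟨hC03, hC02⟩
    | succ n ih =>
      obtain ⟨h1, h2, h3⟩ := hg (seq n) ih
      rw [hseq_succ]
      exact ⟨h3, h2⟩
  have hstep : ∀ n, sat (seq n) ⊆ seq (n + 1) := by
    intro n
    rw [hseq_succ]
    exact (hg (seq n) (hinv n)).1
  refine ⟨⋃ n, seq n, MeasurableSet.iUnion fun n => (hinv n).1, ?_, ?_, ?_⟩
  · intro a ha
    exact Set.mem_iUnion.2 ⟨0, hC01 (hsub_sat A ha)⟩
  · intro x y hxy
    constructor
    · rintro hx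
      obtain ⟨n, hn⟩ := Set.mem_iUnion.1 hx
      exact Set.mem_iUnion.2 ⟨n + 1, hstep n ⟨x, hn, hEequiv.symm hxy⟩⟩
    · rintro hy
      obtain ⟨n, hn⟩ := Set.mem_iUnion.1 hy
      exact Set.mem_iUnion.2 ⟨n + 1, hstep n ⟨y, hn, hxy⟩⟩
  · intro b hb hbC
    obtain ⟨n, hn⟩ := Set.mem_iUnion.1 hbC
    exact Set.disjoint_left.1 (hinv n).2 (hsub_sat B hb) hn

/-- A Borel equivalence relation `E` on a Polish space `X` is Borel reducible to
equality on `2^ω` iff the complement of `E` is a countable union of Borel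
rectangles `A_i × B_i` avoiding `E`. -/
theorem smooth_iff_countable_union_of_rectangles
    {X : Type*} [TopologicalSpace X] [PolishSpace X]
    [MeasurableSpace X] [BorelSpace X]
    (E : Set (X × X)) (hEBorel : MeasurableSet E)
    (hEequiv : Equivalence fun x y => (x, y) ∈ E) :
    (∃ f : X → (ℕ → Bool), Measurable f ∧ ∀ x y, (x, y) ∈ E ↔ f x = f y) ↔
    ∃ A B : ℕ → Set X,
      (∀ i, MeasurableSet (A i)) ∧ (∀ i, MeasurableSet (B i)) ∧
      (∀ i, (A i ×ˢ B i) ∩ E = ∅) ∧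
      Eᶜ = ⋃ i, A i ×ˢ B i := by
  classical
  constructor
  · rintro ⟨f, hf, hfE⟩
    refine ⟨fun i => (fun x => f x (i / 2)) ⁻¹' {decide (i % 2 = 0)},
      fun i => (fun x => f x (i / 2)) ⁻¹' {!decide (i % 2 = 0)}, ?_, ?_, ?_, ?_⟩
    · intro i
      exact ((measurable_pi_apply (i / 2)).comp hf) (measurableSet_singleton _)
    · intro i
      exact ((measurable_pi_apply (i / 2)).comp hf) (measurableSet_singleton _)
    · intro i
      ext ⟨x, y⟩
      simp only [Set.mem_inter_iff, Set.mem_prod, Set.mem_preimage,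
        Set.mem_singleton_iff, Set.mem_empty_iff_false, iff_false, not_and]
      rintro ⟨hx, hy⟩ hE
      have := (hfE x y).1 hE
      rw [this] at hx
      rw [hx] at hy
      exact Bool.not_ne_self _ hy.symm
    · ext ⟨x, y⟩
      simp only [Set.mem_compl_iff, Set.mem_iUnion, Set.mem_prod, Set.mem_preimage,
        Set.mem_singleton_iff]
      constructor
      · intro hE
        have hne : f x ≠ f y := fun h => hE ((hfE x y).2 h)
        obtain ⟨n, hn⟩ := Function.ne_iff.1 hne
        cases hx : f x n <;> cases hy : f y n <;> rw [hx, hy] at hn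
        · exact absurd rfl hn
        · refine ⟨2 * n + 1, ?_, ?_⟩ <;>
            · have h1 : (2 * n + 1) / 2 = n := by omega
              have h2 : ¬((2 * n + 1) % 2 = 0) := by omega
              simp [h1, h2, hx, hy]
        · refine ⟨2 * n, ?_, ?_⟩ <;>
            · have h1 : (2 * n) / 2 = n := by omega
              have h2 : (2 * n) % 2 = 0 := by omega
              simp [h1, h2, hx, hy]
        · exact absurd rfl hn
      · rintro ⟨i, hx, hy⟩ hE
        have := (hfE x y).1 hE
        rw [this] at hx
        rw [hx] at hy
        exact Bool.not_ne_self _ hy.symm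
  · rintro ⟨A, B, hA, hB, hABE, hcompl⟩
    have hC : ∀ i, ∃ C : Set X, MeasurableSet C ∧ A i ⊆ C ∧
        (∀ x y, (x, y) ∈ E → (x ∈ C ↔ y ∈ C)) ∧ ∀ b ∈ B i, b ∉ C :=
      fun i => invariant_separation E hEBorel hEequiv (A i) (B i) (hA i) (hB i) (hABE i)
    choose C hCmeas hAC hCinv hBC using hC
    refine ⟨fun x i => if x ∈ C i then true else false, ?_, ?_⟩
    · refine measurable_pi_lambda _ fun i => ?_
      exact Measurable.ite (hCmeas i) measurable_const measurable_const
    · intro x y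
      constructor
      · intro hE
        funext i
        simp only [hCinv i x y hE]
      · intro hfeq
        by_contra hE
        have hmem : (x, y) ∈ Eᶜ := hE
        rw [hcompl] at hmem
        obtain ⟨i, hi⟩ := Set.mem_iUnion.1 hmem
        obtain ⟨hx, hy⟩ := hi
        have hx' : x ∈ C i := hAC i hx
        have hy' : y ∉ C i := hBC i y hy
        have := congrFun hfeq i
        simp [hx', hy'] at this
end

section
/- Let G be an acyclic graph and let f be a function generating G. Then f ∩ G = {(x, f(x)) : (x, f(x)) ∈ G} is consistent: there are no two edges e, e′ ∈ f ∩ G with e I e′. -/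
namespace Paper

variable {X : Type*}

/-- `G` is acyclic: there is no simple cycle (of length at least 3). -/
def Acyclic (G : Set (X × X)) : Prop :=
  ¬ ∃ (x : X) (p : List X), 2 ≤ p.length ∧ (x :: p).Nodup ∧
      ((x :: p).Chain' fun a b => (a, b) ∈ G) ∧
      ((x :: p).getLast (List.cons_ne_nil x p), x) ∈ G

/-- `e P y`: `y` and `e₀` are in the same component and the (unique) simple path
from `e₀` to `y` goes through `e₁`. -/
def PointsTo (G : Set (X × X)) (e : X × X) (y : X) : Prop :=
  ∃ p : List X, IsPathL G p ∧ p.head? = some e.1 ∧ p.getLast? = some y ∧ e.2 ∈ p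

/-- `e I e'`. -/
def Interferes (G : Set (X × X)) (e e' : X × X) : Prop :=
  e ≠ e' ∧ Conn G e.1 e'.1 ∧ ¬ PointsTo G e e'.1 ∧ ¬ PointsTo G e' e.1

/-- A set of directed edges is consistent if no two of its members satisfy `I`. -/
def Consistent (G : Set (X × X)) (A : Set (X × X)) : Prop :=
  ∀ e ∈ A, ∀ e' ∈ A, ¬ Interferes G e e'

/-- `e ≺ e'`: `e P e'₀` but not `e' P e₀`. -/
def EdgePrec (G : Set (X × X)) (e e' : X × X) : Prop :=
  PointsTo G e e'.1 ∧ ¬ PointsTo G e' e.1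

/-- `A` is downward closed under `≺`. -/
def PrecClosed (G : Set (X × X)) (A : Set (X × X)) : Prop :=
  ∀ e e', EdgePrec G e e' → e' ∈ A → e ∈ A

end Paper

open Paper

private lemma penult_lemma {X : Type*} (G : Set (X × X)) (f : X → X)
    (hgen : G ⊆ {p | p.2 = f p.1 ∨ p.1 = f p.2}) :
    ∀ (l : List X) (a b : X), (a :: b :: l).Nodup →
      ((a :: b :: l).Chain' fun u v => (u, v) ∈ G) → f b = a →
      f ((a :: b :: l).getLast (by simp)) ∈ a :: b :: l := by
  intro l
  induction l with
  | nil => intro a b _ _ hfb; simp [hfb]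
  | cons c l ih =>
    intro a b hnd hch hfb
    have hbc : (b, c) ∈ G := (List.isChain_cons_cons.mp ((List.isChain_cons_cons.mp hch).2)).1
    have hcase := hgen hbc
    have hfc : f c = b := by
      rcases hcase with h | h
      · exfalso
        have h' : c = f b := h
        have : c = a := by rw [h', hfb]
        subst this
        simp at hnd
      · exact (show b = f c from h).symm
    have hnd' : (b :: c :: l).Nodup := hnd.of_cons
    have hch' : ((b :: c :: l).Chain' fun u v => (u, v) ∈ G) := hch.tail
    have := ih b c hnd' hch' hfc
    have hlast : (a :: b :: c :: l).getLast (by simp) =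
        (b :: c :: l).getLast (by simp) := by
      simp [List.getLast_cons]
    rw [hlast]
    exact List.mem_cons_of_mem a this

private lemma conn_simple_path {X : Type*} (G : Set (X × X)) (hG : IsGraph G)
    {x y : X} (h : Conn G x y) :
    ∃ p : List X, IsPathL G p ∧ p.head? = some x ∧ p.getLast? = some y := by
  classical
  let SG : SimpleGraph X :=
    { Adj := fun u v => (u, v) ∈ G
      symm := ⟨fun u v huv => hG.1 u v huv⟩
      loopless := ⟨fun u hu => hG.2 u hu⟩ }
  have hreach : SG.Reachable x y := by
    induction h with
    | refl => exact SimpleGraph.Reachable.refl x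
    | tail _ hadj ihr => exact ihr.trans (SimpleGraph.Adj.reachable hadj)
  obtain ⟨w⟩ := hreach
  refine ⟨w.toPath.1.support, ⟨w.toPath.1.support_ne_nil, w.toPath.2.support_nodup,
    w.toPath.1.isChain_adj_support⟩, ?_, ?_⟩
  · rw [← List.head_eq_iff_head?_eq_some w.toPath.1.support_ne_nil]
    exact SimpleGraph.Walk.head_support _
  · rw [List.getLast?_eq_head?_reverse, ← SimpleGraph.Walk.support_reverse,
      ← List.head_eq_iff_head?_eq_some (SimpleGraph.Walk.support_ne_nil _)]
    exact SimpleGraph.Walk.head_support _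

/-- If `G` is an acyclic graph generated by a function `f`, then
`f ∩ G = {(x, f x) : (x, f x) ∈ G}` is consistent. -/
theorem generating_function_consistent {X : Type*}
    (G : Set (X × X)) (hG : IsGraph G) (hacyc : Acyclic G)
    (f : X → X) (hgen : G ⊆ {p | p.2 = f p.1 ∨ p.1 = f p.2}) :
    Consistent G {p | p ∈ G ∧ p.2 = f p.1} := by
  rintro e ⟨heG, hef⟩ e' ⟨heG', hef'⟩ ⟨hne, hconn, hnp, hnp'⟩
  obtain ⟨p, hp, hhead, hlast⟩ := conn_simple_path G hG hconn
  -- if the heads are equal, the edges are equal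
  have hne1 : e.1 ≠ e'.1 := by
    intro h
    exact hne (Prod.ext h (by rw [hef, hef', h]))
  -- p has length ≥ 2
  obtain ⟨hpne, hpnd, hpch⟩ := hp
  match p, hpne with
  | [a], _ =>
    simp only [List.head?] at hhead
    simp only [List.getLast?] at hlast
    exact (hne1 ((Option.some_injective _ hhead).symm.trans
      (Option.some_injective _ hlast))).elim
  | a :: b :: l, _ =>
    have ha : a = e.1 := by simpa using hhead
    subst ha
    have hab : (e.1, b) ∈ G := (List.isChain_cons_cons.mp hpch).1
    rcases hgen hab with hb | hb
    · -- b = f e.1 = e.2 : e points to e'.1 along p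
      have hb' : b = f e.1 := hb
      exact hnp ⟨e.1 :: b :: l, ⟨by simp, hpnd, hpch⟩, rfl, hlast, by
        rw [show e.2 = b from hef.trans hb'.symm]; simp⟩
    · -- e.1 = f b : the penultimate lemma gives f e'.1 ∈ p
      have hfb : f b = e.1 := hb.symm
      have hkey := penult_lemma G f hgen l e.1 b hpnd hpch hfb
      have hlasteq : (e.1 :: b :: l).getLast (by simp) = e'.1 := by
        have := List.getLast?_eq_getLast (l := e.1 :: b :: l) (by simp)
        rw [this] at hlast
        exact Option.some_injective _ hlast
      rw [hlasteq] at hkey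
      -- build reverse path from e'.1 to e.1 containing e'.2 = f e'.1
      refine hnp' ⟨(e.1 :: b :: l).reverse, ⟨by simp, List.nodup_reverse.mpr hpnd, ?_⟩, ?_, ?_, ?_⟩
      · show List.IsChain _ _
        rw [List.isChain_reverse]
        exact hpch.imp (fun {u v} huv => hG.1 u v huv)
      · rw [List.head?_reverse, hlast]
      · rw [List.getLast?_reverse]; rfl
      · rw [hef', List.mem_reverse]; exact hkey
end

section
/- Let G be an acyclic Borel graph on a standard Borel space, and suppose there is a sequence ⟨A_i : i ∈ ℕ⟩ of Borel sets of directed edges of G, each consistent and downward closed under ≺, with G = ⋃_i (A_i ∪ (−A_i)). Then G is generated by a single Borel function. -/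
open Paper

section Aux

variable {X : Type*}

/-- A nodup list whose head equals its last element, containing an element
different from that common value, is impossible. -/
lemma no_self_pointing {α : Type*} {p : List α} (hnd : p.Nodup) {x : α}
    (hh : p.head? = some x) (hl : p.getLast? = some x) {y : α} (hy : y ∈ p) (hyx : y ≠ x) :
    False := by
  cases p with
  | nil => simp at hh
  | cons a l =>
    have hax : a = x := by simpa using hh
    subst hax
    rcases List.eq_nil_or_concat' l with rfl | ⟨l', b, rfl⟩
    · exact hyx (by simpa using hy)
    · have h2 : (a :: (l' ++ [b])).getLast? = some b := by
        rw [show a :: (l' ++ [b]) = (a :: l') ++ [b] from rfl, List.getLast?_concat]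
      rw [h2] at hl
      have hb : b = a := by exact Option.some_inj.1 hl
      subst hb
      have := (List.nodup_cons.1 hnd).1
      exact this (by simp)

/-- In an acyclic graph, a simple path between the endpoints of an edge is that edge. -/
lemma path_eq_pair {G : Set (X × X)} (hG : IsGraph G) (hacyc : Acyclic G)
    {x y : X} (hxy : (x, y) ∈ G) {p : List X} (hp : IsPathL G p)
    (hh : p.head? = some x) (hl : p.getLast? = some y) : p = [x, y] := by
  obtain ⟨hne, hnd, hch⟩ := hp
  cases p with
  | nil => exact absurd rfl hne
  | cons a l =>
    have hax : a = x := by simpa using hh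
    subst hax
    cases l with
    | nil =>
      have hay : a = y := by simpa using hl
      rw [hay] at hxy
      exact absurd hxy (hG.2 y)
    | cons b m =>
      cases m with
      | nil =>
        have hby : b = y := by simpa using hl
        rw [hby]
      | cons c m' =>
        exfalso
        apply hacyc
        refine ⟨a, b :: c :: m', by simp, hnd, hch, ?_⟩
        have hlast : (a :: b :: c :: m').getLast (List.cons_ne_nil _ _) = y := by
          rw [List.getLast?_eq_getLast_of_ne_nil (List.cons_ne_nil _ _)] at hl
          simpa using hl
        rw [hlast]
        exact hG.1 a y hxy

lemma not_pointsTo {G : Set (X × X)} (hG : IsGraph G) (hacyc : Acyclic G)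
    {x y z : X} (hxy : (x, y) ∈ G) (hzx : z ≠ x) (hzy : z ≠ y) :
    ¬ PointsTo G (x, z) y := by
  rintro ⟨p, hp, hh, hl, hm⟩
  rw [path_eq_pair hG hacyc hxy hp hh hl] at hm
  simp only [List.mem_cons, List.mem_singleton, List.not_mem_nil, or_false] at hm
  rcases hm with h | h
  · exact hzx h
  · exact hzy h

/-- In a consistent set of directed edges, each vertex has at most one out-edge. -/
lemma uniq_out {G A : Set (X × X)} (hG : IsGraph G) (hsub : A ⊆ G)
    (hcons : Consistent G A) {x y z : X} (hy : (x, y) ∈ A) (hz : (x, z) ∈ A) : y = z := by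
  by_contra hne
  have hyx : y ≠ x := fun h => hG.2 x (by have := hsub hy; rw [h] at this; exact this)
  have hzx : z ≠ x := fun h => hG.2 x (by have := hsub hz; rw [h] at this; exact this)
  refine hcons _ hy _ hz ⟨by simp [hne], Relation.ReflTransGen.refl, ?_, ?_⟩
  · rintro ⟨p, ⟨_, hnd, _⟩, hh, hl, hm⟩
    exact no_self_pointing hnd hh hl hm hyx
  · rintro ⟨p, ⟨_, hnd, _⟩, hh, hl, hm⟩
    exact no_self_pointing hnd hh hl hm hzx

/-- Downward closure: any edge pointing into the source of an edge of `A` is in `A`,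
unless it is the reversal of that edge. -/
lemma mem_of_rev {G A : Set (X × X)} (hG : IsGraph G) (hacyc : Acyclic G)
    (hsub : A ⊆ G) (hclosed : PrecClosed G A) {x y z : X}
    (hxz : (x, z) ∈ A) (hyx : (y, x) ∈ G) (hzy : z ≠ y) : (y, x) ∈ A := by
  have hxzG := hsub hxz
  have hzx : z ≠ x := fun h => hG.2 x (h ▸ hxzG)
  have hyxne : y ≠ x := fun h => hG.2 x (h ▸ hyx)
  refine hclosed (y, x) (x, z) ⟨?_, ?_⟩ hxz
  · refine ⟨[y, x], ⟨by simp, by simp [hyxne], ?_⟩, rfl, rfl, by simp⟩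
    exact List.isChain_pair.2 hyx
  · exact not_pointsTo hG hacyc (hG.1 _ _ hyx) hzx hzy

end Aux


/-- If an acyclic Borel graph `G` is covered as `G = ⋃ i, (A i ∪ (-A i))` by Borel
consistent `≺`-downward-closed sets of directed edges, then `G` is generated by a
single Borel function. -/
theorem generated_by_single_function_of_cover
    {X : Type*} [MeasurableSpace X] [StandardBorelSpace X]
    (G : Set (X × X)) (hG : IsGraph G) (hGBorel : MeasurableSet G)
    (hacyc : Acyclic G)
    (A : ℕ → Set (X × X)) (hABorel : ∀ i, MeasurableSet (A i))
    (hAsub : ∀ i, A i ⊆ G)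
    (hAcons : ∀ i, Consistent G (A i)) (hAclosed : ∀ i, PrecClosed G (A i))
    (hcover : G = ⋃ i, (A i ∪ {e | neg e ∈ A i})) :
    ∃ f : X → X, Measurable f ∧ G ⊆ {p | p.2 = f p.1 ∨ p.1 = f p.2} := by
  classical
  rcases isEmpty_or_nonempty X with hX | hX
  · exact ⟨id, measurable_id, fun p _ => (IsEmpty.false p.1).elim⟩
  -- each `A i` has out-degree at most one
  have huniq : ∀ i, ∀ x y z : X, (x, y) ∈ A i → (x, z) ∈ A i → y = z :=
    fun i x y z hy hz => uniq_out hG (hAsub i) (hAcons i) hy hz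
  -- build measurable functions realizing each `A i`
  have hfun : ∀ i : ℕ, ∃ f : X → X, Measurable f ∧ ∀ e ∈ A i, f e.1 = e.2 := by
    intro i
    haveI := (hABorel i).standardBorel
    have hinj : Function.Injective (fun e : A i => (e : X × X).1) := by
      rintro ⟨⟨a, b⟩, hab⟩ ⟨⟨c, d⟩, hcd⟩ h
      simp only [Subtype.mk.injEq] at h ⊢
      obtain rfl : a = c := h
      exact Prod.ext rfl (huniq i a b d hab hcd)
    have hmeas : Measurable (fun e : A i => (e : X × X).1) :=
      measurable_fst.comp measurable_subtype_coe
    obtain ⟨f, hf, hfe⟩ := (hmeas.measurableEmbedding hinj).exists_measurable_extend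
      (measurable_snd.comp measurable_subtype_coe) (fun _ => hX)
    exact ⟨f, hf, fun e he => congrFun hfe ⟨e, he⟩⟩
  choose f hfmeas hf using hfun
  set D : ℕ → Set X := fun i => Prod.fst '' A i with hD
  have hDmeas : ∀ i, MeasurableSet (D i) := by
    intro i
    refine (hABorel i).image_of_measurable_injOn measurable_fst ?_
    rintro ⟨a, b⟩ hab ⟨c, d⟩ hcd h
    simp only at h
    obtain rfl : a = c := h
    exact Prod.ext rfl (huniq i a b d hab hcd)
  have hfD : ∀ i x, x ∈ D i → (x, f i x) ∈ A i := by
    rintro i x ⟨e, he, rfl⟩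
    rw [hf i e he]
    exact he
  set F : X → X := fun x => if h : ∃ i, x ∈ D i then f (Nat.find h) x else x with hFdef
  have hFmem : ∀ x (h : ∃ i, x ∈ D i), (x, F x) ∈ A (Nat.find h) := by
    intro x h
    have : F x = f (Nat.find h) x := dif_pos h
    rw [this]
    exact hfD _ x (Nat.find_spec h)
  have hFmeas : Measurable F := by
    intro s hs
    have hpre : F ⁻¹' s =
        ((⋃ i, D i)ᶜ ∩ s) ∪ ⋃ i, ((D i \ ⋃ j < i, D j) ∩ f i ⁻¹' s) := by
      ext x
      by_cases h : ∃ i, x ∈ D i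
      · have hFx : F x = f (Nat.find h) x := dif_pos h
        constructor
        · intro hmem
          refine Or.inr (Set.mem_iUnion.2 ⟨Nat.find h, ⟨⟨Nat.find_spec h, ?_⟩,
            by rwa [Set.mem_preimage, ← hFx]⟩⟩)
          intro hc
          simp only [Set.mem_iUnion] at hc
          obtain ⟨j, hj, hxj⟩ := hc
          exact Nat.find_min h hj hxj
        · intro hmem
          rcases hmem with ⟨hc, _⟩ | hmem
          · exact absurd h (by simpa using hc)
          · simp only [Set.mem_iUnion] at hmem
            obtain ⟨i, ⟨⟨hi, hmin⟩, hs'⟩⟩ := hmem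
            have hik : Nat.find h = i := by
              refine le_antisymm (Nat.find_le hi) (not_lt.1 fun hlt => ?_)
              exact hmin (Set.mem_iUnion.2 ⟨Nat.find h, Set.mem_iUnion.2 ⟨hlt, Nat.find_spec h⟩⟩)
            rw [Set.mem_preimage, hFx, hik]
            exact hs'
      · have hFx : F x = x := dif_neg h
        constructor
        · intro hmem
          rw [Set.mem_preimage, hFx] at hmem
          exact Or.inl ⟨by simpa using fun i hi => h ⟨i, hi⟩, hmem⟩
        · intro hmem
          rcases hmem with ⟨_, hmem⟩ | hmem
          · rwa [Set.mem_preimage, hFx]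
          · simp only [Set.mem_iUnion] at hmem
            obtain ⟨i, ⟨⟨hi, _⟩, _⟩⟩ := hmem
            exact absurd ⟨i, hi⟩ h
    rw [hpre]
    refine (((MeasurableSet.iUnion hDmeas).compl.inter hs).union
      (MeasurableSet.iUnion fun i => ?_))
    exact ((hDmeas i).diff (MeasurableSet.iUnion fun j =>
      MeasurableSet.iUnion fun _ => hDmeas j)).inter (hfmeas i hs)
  refine ⟨F, hFmeas, ?_⟩
  have key : ∀ x y : X, (x, y) ∈ G → (∃ i, (x, y) ∈ A i) → y = F x ∨ x = F y := by
    rintro x y hxy ⟨i, hi⟩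
    have hx : ∃ j, x ∈ D j := ⟨i, (x, y), hi, rfl⟩
    have hz : (x, F x) ∈ A (Nat.find hx) := hFmem x hx
    by_cases hzy : F x = y
    · exact Or.inl hzy.symm
    have hyx : (y, x) ∈ A (Nat.find hx) :=
      mem_of_rev hG hacyc (hAsub _) (hAclosed _) hz (hG.1 x y hxy) hzy
    have hy : ∃ k, y ∈ D k := ⟨Nat.find hx, (y, x), hyx, rfl⟩
    have hw : (y, F y) ∈ A (Nat.find hy) := hFmem y hy
    by_cases hwx : F y = x
    · exact Or.inr hwx.symm
    have hxy' : (x, y) ∈ A (Nat.find hy) :=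
      mem_of_rev hG hacyc (hAsub _) (hAclosed _) hw hxy hwx
    have hjk : Nat.find hx = Nat.find hy :=
      le_antisymm (Nat.find_le ⟨(x, y), hxy', rfl⟩) (Nat.find_le ⟨(y, x), hyx, rfl⟩)
    exact absurd (huniq (Nat.find hx) x (F x) y hz (hjk ▸ hxy')) hzy
  rintro ⟨x, y⟩ hxy
  have h2 : (x, y) ∈ ⋃ i, (A i ∪ {e | neg e ∈ A i}) := hcover ▸ hxy
  simp only [Set.mem_iUnion, Set.mem_union, Set.mem_setOf_eq, neg] at h2
  obtain ⟨i, hi | hi⟩ := h2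
  · exact key x y hxy ⟨i, hi⟩
  · rcases key y x (hG.1 x y hxy) ⟨i, hi⟩ with h' | h'
    · exact Or.inr h'
    · exact Or.inl h'
end
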